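/- arXiv:2408.12901 — 2 statements merged into one kernel-verified Lean document; each statement's English description precedes it below -/
import Mathlib

section
/- For every prime p and every positive integer n, the group Z_{p^n} × Z_p has the uniformly periodic tiling (UPT) property; that is, every tile of Z_{p^n} × Z_p is either uniformly periodic or dual uniformly periodic. -/
/-- `(Ω, T)` is a tiling pair of the abelian group `G`: every element of `G`
has a unique representation `ω + t` with `ω ∈ Ω`, `t ∈ T`. -/
def IsTilingPair {G : Type*} [AddCommGroup G] (Ω T : Set G) : Prop :=
  ∀ g : G, ∃! p : G × G, p.1 ∈ Ω ∧ p.2 ∈ T ∧ p.1 + p.2 = g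

/-- A nonempty subset `A` of `G` is periodic if `A + g = A` for some nonzero `g`. -/
def IsPeriodic {G : Type*} [AddCommGroup G] (A : Set G) : Prop :=
  A.Nonempty ∧ ∃ g : G, g ≠ 0 ∧ (fun a => a + g) '' A = A

/-- `Ω` is a tile of `G` if it has a tiling complement. -/
def IsTile {G : Type*} [AddCommGroup G] (Ω : Set G) : Prop :=
  ∃ T : Set G, IsTilingPair Ω T

/-- `G` has the periodic tiling (PT) property: for every tiling pair `(Ω, T)`,
either `Ω` is periodic, or `T` can be replaced by a periodic tiling complement. -/
def HasPT (G : Type*) [AddCommGroup G] : Prop :=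
  ∀ Ω T : Set G, IsTilingPair Ω T →
    IsPeriodic Ω ∨ ∃ T' : Set G, IsPeriodic T' ∧ IsTilingPair Ω T'

/-- A tile `Ω` is uniformly periodic if all its tiling complements share a
common nonzero period. -/
def UniformlyPeriodic {G : Type*} [AddCommGroup G] (Ω : Set G) : Prop :=
  ∃ g : G, g ≠ 0 ∧ ∀ T : Set G, IsTilingPair Ω T → (fun t => t + g) '' T = T

/-- A tile `Ω` is dual uniformly periodic if there is a periodic tile `Ω'`
which is a tiling complement of every tiling complement of `Ω`. -/
def DualUniformlyPeriodic {G : Type*} [AddCommGroup G] (Ω : Set G) : Prop :=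
  ∃ Ω' : Set G, IsPeriodic Ω' ∧ IsTile Ω' ∧
    ∀ T : Set G, IsTilingPair Ω T → IsTilingPair Ω' T

/-- `G` has the uniformly periodic tiling (UPT) property: every tile of `G`
is either uniformly periodic or dual uniformly periodic. -/
def HasUPT (G : Type*) [AddCommGroup G] : Prop :=
  ∀ Ω : Set G, IsTile Ω → UniformlyPeriodic Ω ∨ DualUniformlyPeriodic Ω


noncomputable section
namespace UPTaux

open Finset Polynomial

/-- exponential -/
def ee {N : ℕ} (ζ : ℂ) (x : ZMod N) : ℂ := ζ ^ x.val

lemma pow_val_mod {N : ℕ} {ξ : ℂ} (h : ξ ^ N = 1) (k : ℕ) : ξ ^ (k % N) = ξ ^ k := by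
  conv_rhs => rw [← Nat.div_add_mod k N]
  rw [pow_add, pow_mul, h, one_pow, one_mul]

lemma ee_add {N : ℕ} [NeZero N] {ζ : ℂ} (hζ : ζ ^ N = 1) (x y : ZMod N) :
    ee ζ (x + y) = ee ζ x * ee ζ y := by
  unfold ee
  rw [ZMod.val_add, pow_val_mod hζ, pow_add]

lemma ee_mul_val {N : ℕ} {ζ : ℂ} (hζ : ζ ^ N = 1) (x y : ZMod N) :
    ee ζ (x * y) = (ζ ^ x.val) ^ y.val := by
  unfold ee
  rw [ZMod.val_mul, pow_val_mod hζ, pow_mul]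

lemma ee_eq_one_iff {N : ℕ} [NeZero N] {ζ : ℂ} (hζ : IsPrimitiveRoot ζ N) (x : ZMod N) :
    ee ζ x = 1 ↔ x = 0 := by
  unfold ee
  rw [hζ.pow_eq_one_iff_dvd]
  constructor
  · intro hd
    have := Nat.eq_zero_of_dvd_of_lt hd
    rcases Nat.eq_zero_or_pos x.val with h0 | hpos
    · exact (ZMod.val_eq_zero x).mp h0
    · exact absurd (Nat.le_of_dvd hpos hd) (not_le.mpr (ZMod.val_lt x))
  · rintro rfl; simp

/-- sum of powers over ZMod N -/
lemma geo_zmod {N : ℕ} [NeZero N] {ξ : ℂ} (hξN : ξ ^ N = 1) :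
    ∑ t : ZMod N, ξ ^ t.val = if ξ = 1 then (N : ℂ) else 0 := by
  have h1 : ∑ t : ZMod N, ξ ^ t.val = ∑ k ∈ range N, ξ ^ k := by
    apply Finset.sum_nbij' (fun t : ZMod N => t.val) (fun k : ℕ => (k : ZMod N))
    · intro a _; exact mem_range.mpr (ZMod.val_lt a)
    · intro a _; exact mem_univ _
    · intro a _; exact ZMod.natCast_rightInverse a
    · intro a ha; exact ZMod.val_cast_of_lt (mem_range.mp ha)
    · intro a _; rfl
  rw [h1]
  split_ifs with hone
  · subst hone; simp
  · rw [geom_sum_eq hone, hξN]; simp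




section Grp

variable (p n : ℕ)

/-- reduction ZMod (p^n) → ZMod p -/
def red (x : ZMod (p ^ n)) : ZMod p := (x.val : ZMod p)

/-- lift of ZMod p into "top level" of ZMod (p^n) -/
def lift1 (t : ZMod p) : ZMod (p ^ n) := (p : ZMod (p ^ n)) ^ (n - 1) * (t.val : ZMod (p ^ n))

/-- character exponent -/
def kap (a : ZMod (p ^ n)) (b : ZMod p) (g : ZMod (p ^ n) × ZMod p) : ZMod (p ^ n) :=
  a * g.1 + lift1 p n (b * g.2)

variable {p n}

section Basic

variable (hp : 2 ≤ p) (hn : 1 ≤ n)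
include hp hn

lemma qpos : 0 < p ^ n := Nat.pow_pos (n := n) (by omega)

lemma qne : NeZero (p ^ n) := ⟨pow_ne_zero n (by omega)⟩

end Basic

variable (hp : 2 ≤ p) (hn : 1 ≤ n)

-- convenient local instances will be provided with haveI in proofs.

lemma castmod (hn : 1 ≤ n) (k : ℕ) : ((k % p ^ n : ℕ) : ZMod p) = (k : ZMod p) := by
  conv_rhs => rw [← Nat.div_add_mod k (p ^ n)]
  push_cast
  rw [ZMod.natCast_self]
  rw [zero_pow (by omega), zero_mul, zero_add]

lemma red_natCast (hn : 1 ≤ n) [NeZero (p ^ n)] (k : ℕ) : red p n (k : ZMod (p ^ n)) = (k : ZMod p) := by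
  unfold red
  rw [ZMod.val_natCast, castmod hn]

lemma red_add (hn : 1 ≤ n) [NeZero (p ^ n)] (x y : ZMod (p ^ n)) :
    red p n (x + y) = red p n x + red p n y := by
  unfold red
  rw [ZMod.val_add, castmod hn]
  push_cast
  ring

lemma red_mul (hn : 1 ≤ n) [NeZero (p ^ n)] (x y : ZMod (p ^ n)) :
    red p n (x * y) = red p n x * red p n y := by
  unfold red
  rw [ZMod.val_mul, castmod hn]
  push_cast
  ring

lemma red_eq_zero_iff [NeZero (p ^ n)] (x : ZMod (p ^ n)) : red p n x = 0 ↔ p ∣ x.val := by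
  unfold red
  exact ZMod.natCast_eq_zero_iff _ _

/-- Key: p^(n-1) * x only depends on x mod p. -/
lemma pow_mul_eq_of_red_eq (hn : 1 ≤ n) [NeZero (p ^ n)] {x y : ZMod (p ^ n)}
    (h : red p n x = red p n y) :
    (p : ZMod (p ^ n)) ^ (n - 1) * x = (p : ZMod (p ^ n)) ^ (n - 1) * y := by
  have hd : red p n (x - y) = 0 := by
    have := red_add hn (y := x - y) (x := y)
    rw [add_sub_cancel] at this
    rw [this] at h
    linear_combination h
  rw [red_eq_zero_iff] at hd
  obtain ⟨k, hk⟩ := hd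
  have hxy : x - y = ((p * k : ℕ) : ZMod (p ^ n)) := by
    rw [← hk]
    exact (ZMod.natCast_rightInverse _).symm
  have : (p : ZMod (p ^ n)) ^ (n - 1) * (x - y) = 0 := by
    rw [hxy]
    push_cast
    rw [← mul_assoc]
    rw [show ((p : ZMod (p ^ n)) ^ (n-1) * (p: ZMod (p ^ n))) = (p : ZMod (p ^ n)) ^ n by
      rw [← pow_succ]; congr 1; omega]
    rw [show ((p : ZMod (p ^ n)) ^ n) = ((p ^ n : ℕ) : ZMod (p ^ n)) by push_cast; ring]
    rw [ZMod.natCast_self, zero_mul]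
  linear_combination this

lemma lift1_cast_eq (hn : 1 ≤ n) [NeZero (p ^ n)] (s t : ZMod p) (h : s = t) :
    lift1 p n s = lift1 p n t := by rw [h]

lemma red_lift_val (hn : 1 ≤ n) [NeZero (p ^ n)] [NeZero p] (t : ZMod p) :
    red p n ((t.val : ℕ) : ZMod (p ^ n)) = t := by
  rw [red_natCast hn]
  exact ZMod.natCast_rightInverse t

lemma lift1_add (hn : 1 ≤ n) [NeZero (p ^ n)] [NeZero p] (s t : ZMod p) :
    lift1 p n (s + t) = lift1 p n s + lift1 p n t := by
  unfold lift1
  rw [← mul_add]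
  apply pow_mul_eq_of_red_eq hn
  rw [red_add hn, red_lift_val hn, red_lift_val hn, red_lift_val hn]

lemma lift1_zero (hn : 1 ≤ n) [NeZero (p ^ n)] : lift1 p n 0 = 0 := by
  unfold lift1
  simp [ZMod.val_zero]

lemma mul_lift1 (hn : 1 ≤ n) [NeZero (p ^ n)] [NeZero p] (a : ZMod (p ^ n)) (t : ZMod p) :
    a * lift1 p n t = lift1 p n (red p n a * t) := by
  unfold lift1
  rw [← mul_assoc, mul_comm a ((p : ZMod (p^n)) ^ (n-1)), mul_assoc]
  apply pow_mul_eq_of_red_eq hn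
  rw [red_mul hn, red_lift_val hn, red_lift_val hn]

lemma lift1_eq_zero_iff [NeZero (p ^ n)] [NeZero p] (hp : 2 ≤ p) (hn : 1 ≤ n) (t : ZMod p) :
    lift1 p n t = 0 ↔ t = 0 := by
  unfold lift1
  constructor
  · intro h
    have h2 : (((p ^ (n - 1) * t.val : ℕ)) : ZMod (p ^ n)) = 0 := by push_cast; ring_nf; ring_nf at h; exact h
    rw [ZMod.natCast_eq_zero_iff] at h2
    have hn1 : p ^ n = p ^ (n - 1) * p := by rw [← pow_succ]; congr 1; omega
    rw [hn1] at h2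
    have hpp : p ∣ t.val := by
      rcases h2 with ⟨c, hc⟩
      have hpow : 0 < p ^ (n - 1) := Nat.pow_pos (n := _) (by omega)
      rw [mul_assoc] at hc
      exact ⟨c, Nat.eq_of_mul_eq_mul_left hpow hc⟩
    have hvlt : t.val < p := ZMod.val_lt t
    have : t.val = 0 := Nat.eq_zero_of_dvd_of_lt hpp hvlt
    exact (ZMod.val_eq_zero t).mp this
  · rintro rfl; simp [ZMod.val_zero]

end Grp


section Chi

variable {p n : ℕ} [NeZero (p ^ n)] [NeZero p]
variable {ζ : ℂ} (hζ : IsPrimitiveRoot ζ (p ^ n))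

/-- the character -/
def chi (ζ : ℂ) (ab g : ZMod (p ^ n) × ZMod p) : ℂ := ee ζ (kap p n ab.1 ab.2 g)

include hζ

lemma hζpow : ζ ^ (p ^ n) = 1 := hζ.pow_eq_one

variable (hn : 1 ≤ n)
include hn

lemma kap_add (ab g g' : ZMod (p ^ n) × ZMod p) :
    kap p n ab.1 ab.2 (g + g') = kap p n ab.1 ab.2 g + kap p n ab.1 ab.2 g' := by
  unfold kap
  have : ab.2 * (g + g').2 = ab.2 * g.2 + ab.2 * g'.2 := by
    simp [Prod.snd_add, mul_add]
  rw [this, lift1_add hn]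
  simp [Prod.fst_add, mul_add]
  ring

lemma chi_add (ab g g' : ZMod (p ^ n) × ZMod p) :
    chi ζ ab (g + g') = chi ζ ab g * chi ζ ab g' := by
  unfold chi
  rw [kap_add hζ hn, ee_add (hζpow hζ)]

lemma kap_symm (ab g : ZMod (p ^ n) × ZMod p) :
    kap p n ab.1 ab.2 g = kap p n g.1 g.2 ab := by
  unfold kap
  rw [mul_comm ab.2 g.2, mul_comm ab.1 g.1]

lemma chi_symm (ab g : ZMod (p ^ n) × ZMod p) : chi ζ ab g = chi ζ g ab := by
  unfold chi; rw [kap_symm hζ hn]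

omit hζ hn in
lemma chi_zero_right (hn' : 1 ≤ n) (ab : ZMod (p ^ n) × ZMod p) : chi ζ ab 0 = 1 := by
  unfold chi kap
  simp only [Prod.snd_zero, mul_zero, Prod.fst_zero]
  rw [lift1_zero hn']
  simp [ee, ZMod.val_zero]

lemma chi_zero_left (ab : ZMod (p ^ n) × ZMod p) : chi ζ 0 ab = 1 := by
  rw [chi_symm hζ hn]; exact chi_zero_right (p := p) hn ab


lemma chi_nsmul (ab g : ZMod (p ^ n) × ZMod p) (k : ℕ) :
    chi ζ ab (k • g) = (chi ζ ab g) ^ k := by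
  induction k with
  | zero => simp only [zero_nsmul, pow_zero]; exact chi_zero_right hn ab
  | succ k ih => rw [succ_nsmul, chi_add hζ hn, ih, pow_succ]

lemma chi_factor (ab g : ZMod (p ^ n) × ZMod p) :
    chi ζ ab g = ee ζ (ab.1 * g.1) * ee ζ (lift1 p n (ab.2 * g.2)) := by
  unfold chi kap
  rw [ee_add (hζpow hζ)]

lemma ee_lift1 (t : ZMod p) : ee ζ (lift1 p n t) = (ζ ^ (p ^ (n - 1))) ^ t.val := by
  have : lift1 p n t = ((p ^ (n - 1) * t.val : ℕ) : ZMod (p ^ n)) := by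
    unfold lift1; push_cast; ring
  rw [this]
  unfold ee
  rw [ZMod.val_natCast, pow_val_mod (hζpow hζ), pow_mul]

lemma zeta_p_prim (hp : p.Prime) : IsPrimitiveRoot (ζ ^ (p ^ (n - 1))) p := by
  apply IsPrimitiveRoot.pow (Nat.pow_pos (n := n) hp.pos) hζ
  rw [← pow_succ]
  congr 1
  omega

lemma zetap_pow_p : (ζ ^ (p ^ (n - 1))) ^ p = 1 := by
  rw [← pow_mul, ← pow_succ, show n - 1 + 1 = n from by omega, hζpow hζ]

/-- full character sum over the group -/
lemma sum_chi (hp : p.Prime) (ab : ZMod (p ^ n) × ZMod p) :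
    ∑ g : ZMod (p ^ n) × ZMod p, chi ζ ab g
      = if ab = 0 then ((p ^ n * p : ℕ) : ℂ) else 0 := by
  rw [Fintype.sum_prod_type]
  have hfac : ∀ x : ZMod (p ^ n), ∀ y : ZMod p,
      chi ζ ab (x, y) = ee ζ (ab.1 * x) * ee ζ (lift1 p n (ab.2 * y)) := by
    intro x y; exact chi_factor hζ hn ab (x, y)
  simp only [hfac]
  rw [← Finset.sum_mul_sum]
  have hx : ∑ x : ZMod (p ^ n), ee ζ (ab.1 * x) = if ab.1 = 0 then ((p ^ n : ℕ) : ℂ) else 0 := by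
    have : ∀ x : ZMod (p ^ n), ee ζ (ab.1 * x) = (ζ ^ ab.1.val) ^ x.val := fun x =>
      ee_mul_val (hζpow hζ) ab.1 x
    simp only [this]
    rw [geo_zmod (by rw [← pow_mul, mul_comm, pow_mul, hζpow hζ, one_pow])]
    have h1 : (ζ ^ ab.1.val = 1) ↔ ab.1 = 0 := ee_eq_one_iff hζ ab.1
    split_ifs with h' h'' h''
    · rfl
    · exact absurd (h1.mp h') h''
    · exact absurd (h1.mpr h'') h'
    · rfl
  have hy : ∑ y : ZMod p, ee ζ (lift1 p n (ab.2 * y)) = if ab.2 = 0 then ((p : ℕ) : ℂ) else 0 := by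
    have hprim := zeta_p_prim hζ hn hp
    have hpp := zetap_pow_p hζ hn
    have hexp : ∀ y : ZMod p, ee ζ (lift1 p n (ab.2 * y)) = ((ζ ^ (p ^ (n - 1))) ^ ab.2.val) ^ y.val := by
      intro y
      rw [ee_lift1 hζ hn, ZMod.val_mul, pow_val_mod hpp, pow_mul]
    simp only [hexp]
    rw [geo_zmod (by rw [← pow_mul, mul_comm ab.2.val p, pow_mul, hpp, one_pow])]
    have h1 : ((ζ ^ (p ^ (n - 1))) ^ ab.2.val = 1) ↔ ab.2 = 0 := by
      rw [hprim.pow_eq_one_iff_dvd]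
      constructor
      · intro hd
        rcases Nat.eq_zero_or_pos ab.2.val with h | h
        · exact (ZMod.val_eq_zero ab.2).mp h
        · exact absurd (Nat.le_of_dvd h hd) (not_le.mpr (ZMod.val_lt ab.2))
      · rintro h; rw [(ZMod.val_eq_zero ab.2).mpr h]; exact dvd_zero p
    split_ifs with h' h'' h''
    · rfl
    · exact absurd (h1.mp h') h''
    · exact absurd (h1.mpr h'') h'
    · rfl
  rw [hx, hy]
  by_cases h1 : ab.1 = 0 <;> by_cases h2 : ab.2 = 0 <;>
    simp [h1, h2, Prod.ext_iff, Nat.cast_mul]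

lemma sum_chi_freq (hp : p.Prime) (g : ZMod (p ^ n) × ZMod p) :
    ∑ ab : ZMod (p ^ n) × ZMod p, chi ζ ab g
      = if g = 0 then ((p ^ n * p : ℕ) : ℂ) else 0 := by
  have : ∀ ab : ZMod (p ^ n) × ZMod p, chi ζ ab g = chi ζ g ab := fun ab => chi_symm hζ hn ab g
  simp only [this]
  exact sum_chi hζ hn hp g

/-- Fourier inversion: function with zero transform is zero. -/
lemma inversion (hp : p.Prime) (F : ZMod (p ^ n) × ZMod p → ℂ)
    (h : ∀ ab : ZMod (p ^ n) × ZMod p, ∑ g : ZMod (p ^ n) × ZMod p, F g * chi ζ ab g = 0)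
    (g₀ : ZMod (p ^ n) × ZMod p) : F g₀ = 0 := by
  have key : ∑ ab : ZMod (p ^ n) × ZMod p, (∑ g : ZMod (p ^ n) × ZMod p, F g * chi ζ ab g) * chi ζ ab (-g₀) = 0 := by
    simp only [h, zero_mul, Finset.sum_const_zero]
  have swap : ∑ ab : ZMod (p ^ n) × ZMod p, (∑ g, F g * chi ζ ab g) * chi ζ ab (-g₀)
      = ∑ g : ZMod (p ^ n) × ZMod p, F g * ∑ ab : ZMod (p ^ n) × ZMod p, chi ζ ab (g - g₀) := by
    have step1 : ∀ ab : ZMod (p ^ n) × ZMod p,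
        (∑ g, F g * chi ζ ab g) * chi ζ ab (-g₀) = ∑ g, F g * chi ζ ab (g - g₀) := by
      intro ab
      rw [Finset.sum_mul]
      apply Finset.sum_congr rfl
      intro g _
      rw [show g - g₀ = g + (-g₀) from by ring, chi_add hζ hn]
      ring
    rw [Finset.sum_congr rfl (fun ab _ => step1 ab), Finset.sum_comm]
    apply Finset.sum_congr rfl
    intro g _
    rw [Finset.mul_sum]
  rw [swap] at key
  have hptw : ∀ g : ZMod (p ^ n) × ZMod p,
      F g * ∑ ab : ZMod (p ^ n) × ZMod p, chi ζ ab (g - g₀)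
        = if g = g₀ then F g₀ * ((p ^ n * p : ℕ) : ℂ) else 0 := by
    intro g
    rw [sum_chi_freq hζ hn hp]
    by_cases hg : g = g₀
    · subst hg; simp
    · rw [if_neg (by intro hc; exact hg (sub_eq_zero.mp hc)), if_neg hg, mul_zero]
  rw [Finset.sum_congr rfl (fun g _ => hptw g)] at key
  rw [Finset.sum_ite_eq' Finset.univ g₀ (fun _ => F g₀ * ((p ^ n * p : ℕ) : ℂ))] at key
  simp only [Finset.mem_univ, if_true] at key
  have hNE : ((p ^ n * p : ℕ) : ℂ) ≠ 0 := by
    have h1 : 0 < p ^ n * p := Nat.mul_pos (Nat.pow_pos (n := n) hp.pos) hp.pos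
    exact Nat.cast_ne_zero.mpr (by omega)
  exact (mul_eq_zero.mp key).resolve_right hNE

end Chi


section Tiling

variable {p n : ℕ} [NeZero (p ^ n)] [NeZero p]
variable {ζ : ℂ}

/-- Fourier coefficient of a finite set -/
def FH (ζ : ℂ) (A : Finset (ZMod (p ^ n) × ZMod p)) (ab : ZMod (p ^ n) × ZMod p) : ℂ :=
  ∑ g ∈ A, chi ζ ab g

lemma tiling_sum {M : Type*} [AddCommMonoid M] {Ω T : Set (ZMod (p ^ n) × ZMod p)}
    (h : IsTilingPair Ω T) (f : ZMod (p ^ n) × ZMod p → M) :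
    ∑ z ∈ (Set.toFinite Ω).toFinset ×ˢ (Set.toFinite T).toFinset, f (z.1 + z.2)
      = ∑ g : ZMod (p ^ n) × ZMod p, f g := by
  apply Finset.sum_nbij' (fun z : (ZMod (p ^ n) × ZMod p) × (ZMod (p ^ n) × ZMod p) => z.1 + z.2)
    (fun g => (h g).exists.choose)
  · intro a _; exact Finset.mem_univ _
  · intro g _
    obtain ⟨h1, h2, h3⟩ := (h g).exists.choose_spec
    rw [Finset.mem_product]
    exact ⟨(Set.toFinite Ω).mem_toFinset.mpr h1, (Set.toFinite T).mem_toFinset.mpr h2⟩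
  · intro z hz
    rw [Finset.mem_product] at hz
    have hz1 := (Set.toFinite Ω).mem_toFinset.mp hz.1
    have hz2 := (Set.toFinite T).mem_toFinset.mp hz.2
    exact ((h (z.1 + z.2)).unique (h (z.1 + z.2)).exists.choose_spec ⟨hz1, hz2, rfl⟩)
  · intro g _
    exact ((h g).exists.choose_spec).2.2
  · intro z _; rfl

variable (hζ : IsPrimitiveRoot ζ (p ^ n)) (hn : 1 ≤ n) (hp : p.Prime)
include hζ hn hp

/-- K2: tiling pairs have orthogonal Fourier transforms away from 0. -/
lemma tiling_fourier {Ω T : Set (ZMod (p ^ n) × ZMod p)} (h : IsTilingPair Ω T)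
    {ab : ZMod (p ^ n) × ZMod p} (hab : ab ≠ 0) :
    FH ζ (Set.toFinite Ω).toFinset ab * FH ζ (Set.toFinite T).toFinset ab = 0 := by
  unfold FH
  rw [Finset.sum_mul_sum]
  have : ∑ i ∈ (Set.toFinite Ω).toFinset, ∑ j ∈ (Set.toFinite T).toFinset, chi ζ ab i * chi ζ ab j
      = ∑ z ∈ (Set.toFinite Ω).toFinset ×ˢ (Set.toFinite T).toFinset, chi ζ ab (z.1 + z.2) := by
    rw [Finset.sum_product]
    exact Finset.sum_congr rfl fun i _ => Finset.sum_congr rfl fun j _ => (chi_add hζ hn ab i j).symm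
  rw [this, tiling_sum h (chi ζ ab), sum_chi hζ hn hp, if_neg hab]

omit hζ in
/-- cardinality relation for tiling pairs -/
lemma tiling_card {Ω T : Set (ZMod (p ^ n) × ZMod p)} (h : IsTilingPair Ω T) :
    (Set.toFinite Ω).toFinset.card * (Set.toFinite T).toFinset.card = p ^ n * p := by
  have := tiling_sum h (fun _ => (1 : ℕ))
  rw [Finset.sum_const, Finset.sum_const, Finset.card_product, smul_eq_mul, mul_one,
    smul_eq_mul, mul_one] at this
  rw [this, Finset.card_univ, Fintype.card_prod, ZMod.card, ZMod.card]

/-- K3: converse -/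
lemma tiling_of_fourier (OF TF : Finset (ZMod (p ^ n) × ZMod p))
    (hcard : OF.card * TF.card = p ^ n * p)
    (hz : ∀ ab : ZMod (p ^ n) × ZMod p, ab ≠ 0 → FH ζ OF ab * FH ζ TF ab = 0) :
    IsTilingPair (↑OF : Set (ZMod (p ^ n) × ZMod p)) (↑TF : Set (ZMod (p ^ n) × ZMod p)) := by
  classical
  set r : ZMod (p ^ n) × ZMod p → ℂ :=
    fun g => ((((OF ×ˢ TF).filter (fun z => z.1 + z.2 = g)).card : ℕ) : ℂ) with hr
  have hFT : ∀ ab : ZMod (p ^ n) × ZMod p,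
      ∑ g : ZMod (p ^ n) × ZMod p, r g * chi ζ ab g = FH ζ OF ab * FH ζ TF ab := by
    intro ab
    have h1 : ∀ g : ZMod (p ^ n) × ZMod p,
        r g * chi ζ ab g = ∑ z ∈ (OF ×ˢ TF).filter (fun z => z.1 + z.2 = g), chi ζ ab (z.1 + z.2) := by
      intro g
      rw [Finset.sum_congr rfl (fun z hz => by
        rw [(Finset.mem_filter.mp hz).2]), Finset.sum_const, hr]
      simp [mul_comm]
    rw [Finset.sum_congr rfl (fun g _ => h1 g),
      Finset.sum_fiberwise_of_maps_to (fun z _ => Finset.mem_univ (z.1 + z.2))]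
    unfold FH
    rw [Finset.sum_mul_sum, Finset.sum_product]
    exact Finset.sum_congr rfl fun i _ => Finset.sum_congr rfl fun j _ => (chi_add hζ hn ab i j)
  have hinv : ∀ g : ZMod (p ^ n) × ZMod p, r g - 1 = 0 := by
    intro g₀
    apply inversion hζ hn hp (fun g => r g - 1) _ g₀
    intro ab
    have : ∑ g : ZMod (p ^ n) × ZMod p, (r g - 1) * chi ζ ab g
        = (∑ g : ZMod (p ^ n) × ZMod p, r g * chi ζ ab g) - ∑ g : ZMod (p ^ n) × ZMod p, chi ζ ab g := by
      rw [← Finset.sum_sub_distrib]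
      apply Finset.sum_congr rfl
      intro g _; ring
    rw [this, hFT, sum_chi hζ hn hp]
    by_cases hab : ab = 0
    · subst hab
      have hOF : FH ζ OF 0 = (OF.card : ℂ) := by
        unfold FH
        rw [Finset.sum_congr rfl (fun g _ => chi_zero_left hζ hn g), Finset.sum_const]
        simp
      have hTF : FH ζ TF 0 = (TF.card : ℂ) := by
        unfold FH
        rw [Finset.sum_congr rfl (fun g _ => chi_zero_left hζ hn g), Finset.sum_const]
        simp
      rw [hOF, hTF, if_pos rfl]
      push_cast [← hcard]
      ring
    · rw [hz ab hab, if_neg hab, sub_zero]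
  intro g
  have hone : (((OF ×ˢ TF).filter (fun z => z.1 + z.2 = g)).card : ℕ) = 1 := by
    have h := hinv g
    rw [sub_eq_zero] at h
    have h' : ((((OF ×ˢ TF).filter (fun z => z.1 + z.2 = g)).card : ℕ) : ℂ) = 1 := h
    exact_mod_cast h'
  obtain ⟨z, hzz⟩ := Finset.card_eq_one.mp hone
  have hzmem : z ∈ (OF ×ˢ TF).filter (fun z => z.1 + z.2 = g) := by rw [hzz]; exact Finset.mem_singleton_self z
  rw [Finset.mem_filter, Finset.mem_product] at hzmem
  refine ⟨z, ⟨hzmem.1.1, hzmem.1.2, hzmem.2⟩, ?_⟩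
  intro w hw
  have hwmem : w ∈ (OF ×ˢ TF).filter (fun z => z.1 + z.2 = g) := by
    rw [Finset.mem_filter, Finset.mem_product]
    exact ⟨⟨hw.1, hw.2.1⟩, hw.2.2⟩
  rw [hzz, Finset.mem_singleton] at hwmem
  exact hwmem

/-- K4: Fourier support inside the annihilator implies periodicity. -/
lemma periodic_of_fourier (TF : Finset (ZMod (p ^ n) × ZMod p)) (u : ZMod (p ^ n) × ZMod p)
    (hvan : ∀ ab : ZMod (p ^ n) × ZMod p, chi ζ ab u ≠ 1 → FH ζ TF ab = 0) :
    (fun t => t + u) '' (↑TF : Set (ZMod (p ^ n) × ZMod p)) = ↑TF := by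
  classical
  set F : ZMod (p ^ n) × ZMod p → ℂ :=
    fun g => (if g + u ∈ TF then (1 : ℂ) else 0) - (if g ∈ TF then (1 : ℂ) else 0) with hF
  have hFTF : ∀ ab : ZMod (p ^ n) × ZMod p, FH ζ TF ab
      = ∑ g : ZMod (p ^ n) × ZMod p, (if g ∈ TF then (1 : ℂ) else 0) * chi ζ ab g := by
    intro ab
    rw [Finset.sum_congr rfl (fun g _ => by rw [ite_mul, one_mul, zero_mul]), ← Finset.sum_filter]
    unfold FH
    congr 1
    rw [Finset.filter_mem_eq_inter, Finset.univ_inter]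
  have hinv : ∀ g, F g = 0 := by
    intro g₀
    apply inversion hζ hn hp F _ g₀
    intro ab
    have hsplit : ∑ g : ZMod (p ^ n) × ZMod p, F g * chi ζ ab g
        = (∑ g : ZMod (p ^ n) × ZMod p, (if g + u ∈ TF then (1:ℂ) else 0) * chi ζ ab g)
          - FH ζ TF ab := by
      rw [hFTF ab, ← Finset.sum_sub_distrib]
      apply Finset.sum_congr rfl
      intro g _
      rw [hF]
      ring
    have hshift : ∑ g : ZMod (p ^ n) × ZMod p, (if g + u ∈ TF then (1:ℂ) else 0) * chi ζ ab g
        = FH ζ TF ab * chi ζ ab (-u) := by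
      rw [Fintype.sum_equiv (Equiv.addRight u)
        (fun g => (if g + u ∈ TF then (1:ℂ) else 0) * chi ζ ab g)
        (fun h => (if h ∈ TF then (1:ℂ) else 0) * chi ζ ab (h - u))
        (fun x => by simp only [Equiv.coe_addRight, add_sub_cancel_right]; rfl)]
      rw [hFTF ab, Finset.sum_mul]
      apply Finset.sum_congr rfl
      intro g _
      rw [show g - u = g + (-u) from by ring, chi_add hζ hn]
      ring
    rw [hsplit, hshift]
    by_cases hu : chi ζ ab u = 1
    · have hmu : chi ζ ab (-u) = 1 := by
        have h0 : chi ζ ab (u + (-u)) = 1 := by rw [add_neg_cancel]; exact chi_zero_right hn ab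
        rw [chi_add hζ hn, hu, one_mul] at h0
        exact h0
      rw [hmu, mul_one, sub_self]
    · rw [hvan ab hu]
      ring
  have hiff : ∀ g : ZMod (p ^ n) × ZMod p, (g + u ∈ TF ↔ g ∈ TF) := by
    intro g
    by_cases h1 : g + u ∈ TF <;> by_cases h2 : g ∈ TF
    · exact iff_of_true h1 h2
    · exfalso; have := hinv g; rw [hF] at this; simp [h1, h2] at this
    · exfalso; have := hinv g; rw [hF] at this; simp [h1, h2] at this
    · exact iff_of_false h1 h2
  ext t
  simp only [Set.mem_image, Finset.mem_coe]
  constructor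
  · rintro ⟨s, hs, rfl⟩
    exact (hiff s).mpr hs
  · intro ht
    exact ⟨t - u, (hiff (t - u)).mp (by rw [sub_add_cancel]; exact ht), by rw [sub_add_cancel]⟩

end Tiling


section Poly

variable {p n : ℕ} [NeZero (p ^ n)] [NeZero p]
variable {ζ : ℂ}

/-- mask polynomial of the φ_c-projection of a finite set -/
def Pc (OF : Finset (ZMod (p ^ n) × ZMod p)) (c : ZMod p) : Polynomial ℤ :=
  ∑ g ∈ OF, Polynomial.X ^ (kap p n 1 c g).val

lemma Pc_eval_one (OF : Finset (ZMod (p ^ n) × ZMod p)) (c : ZMod p) :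
    (Pc OF c).eval 1 = (OF.card : ℤ) := by
  unfold Pc
  rw [Polynomial.eval_finset_sum]
  simp

variable (hζ : IsPrimitiveRoot ζ (p ^ n)) (hn : 1 ≤ n)
include hζ hn

/-- The evaluation lemma: Fourier coefficients along slope c are evaluations of Pc. -/
lemma Pc_aeval (OF : Finset (ZMod (p ^ n) × ZMod p)) (c : ZMod p) (a : ZMod (p ^ n)) :
    Polynomial.aeval (ζ ^ a.val) (Pc OF c) = FH ζ OF (a, c * red p n a) := by
  unfold Pc FH
  rw [map_sum]
  apply Finset.sum_congr rfl
  intro g _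
  rw [Polynomial.aeval_X_pow]
  have h1 : (ζ ^ a.val) ^ (kap p n 1 c g).val = ee ζ (a * kap p n 1 c g) :=
    (ee_mul_val (hζpow hζ) a (kap p n 1 c g)).symm
  rw [h1]
  unfold chi
  congr 1
  unfold kap
  rw [mul_add, one_mul, mul_lift1 hn]
  congr 2
  rw [← mul_assoc, mul_comm (red p n a) c]

omit hζ hn in
/-- M1: vanishing at a primitive p^m-th root gives cyclotomic divisibility -/
lemma cyclo_dvd_of_aeval {ξ : ℂ} {m : ℕ} (hm : 0 < m) (hprim : IsPrimitiveRoot ξ (p ^ m))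
    (hp : p.Prime) {P : Polynomial ℤ} (hv : Polynomial.aeval ξ P = 0) :
    Polynomial.cyclotomic (p ^ m) ℤ ∣ P := by
  have hpos : 0 < p ^ m := Nat.pow_pos (n := m) hp.pos
  rw [Polynomial.cyclotomic_eq_minpoly hprim hpos]
  exact minpoly.isIntegrallyClosed_dvd (hprim.isIntegral hpos) hv

omit hζ hn in
/-- M2: cyclotomic divisibility gives vanishing at every primitive root -/
lemma aeval_of_cyclo_dvd {ξ : ℂ} {m : ℕ} (hprim : IsPrimitiveRoot ξ (p ^ m))
    (hp : p.Prime) {P : Polynomial ℤ} (hdvd : Polynomial.cyclotomic (p ^ m) ℤ ∣ P) :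
    Polynomial.aeval ξ P = 0 := by
  obtain ⟨R, hR⟩ := hdvd
  rw [hR, map_mul]
  have : Polynomial.aeval ξ (Polynomial.cyclotomic (p ^ m) ℤ) = 0 := by
    have h1 : Polynomial.aeval ξ (Polynomial.cyclotomic (p ^ m) ℤ)
        = Polynomial.eval ξ (Polynomial.cyclotomic (p ^ m) ℂ) := by
      rw [Polynomial.aeval_def, Polynomial.eval₂_eq_eval_map, Polynomial.map_cyclotomic]
    rw [h1]
    have hpos : 0 < p ^ m := Nat.pow_pos (n := m) hp.pos
    haveI : NeZero ((p ^ m : ℕ) : ℂ) := ⟨Nat.cast_ne_zero.mpr (by omega)⟩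
    exact (Polynomial.isRoot_cyclotomic_iff.mpr hprim)
  rw [this, zero_mul]

omit hζ hn in
/-- standard primitive roots ξ_m := ζ^(p^(n-m)) -/
lemma xi_prim (hζ : IsPrimitiveRoot ζ (p ^ n)) (hp : p.Prime) {m : ℕ} (hm : m ≤ n) :
    IsPrimitiveRoot (ζ ^ (p ^ (n - m))) (p ^ m) := by
  apply IsPrimitiveRoot.pow (Nat.pow_pos (n := n) hp.pos) hζ
  rw [← pow_add]
  congr 1
  omega

omit hζ hn in
/-- KCL: the counting lemma -/
lemma kcl (hζ : IsPrimitiveRoot ζ (p ^ n)) (hp : p.Prime) (S : Finset ℕ) :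
    ∀ P : Polynomial ℤ, S ⊆ Finset.Icc 1 n →
    (∀ m ∈ S, Polynomial.aeval (ζ ^ (p ^ (n - m))) P = 0) →
    (p : ℤ) ^ S.card ∣ P.eval 1 := by
  classical
  induction S using Finset.induction_on with
  | empty => intro P _ _; simpa using dvd_refl _
  | @insert m S hm ih =>
    intro P hsub hvan
    have hmIcc : m ∈ Finset.Icc 1 n := hsub (Finset.mem_insert_self m S)
    rw [Finset.mem_Icc] at hmIcc
    have hprim : IsPrimitiveRoot (ζ ^ (p ^ (n - m))) (p ^ m) := xi_prim hζ hp hmIcc.2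
    have hdvd : Polynomial.cyclotomic (p ^ m) ℤ ∣ P :=
      cyclo_dvd_of_aeval (by omega) hprim hp (hvan m (Finset.mem_insert_self m S))
    obtain ⟨R, hR⟩ := hdvd
    have hvanR : ∀ m' ∈ S, Polynomial.aeval (ζ ^ (p ^ (n - m'))) R = 0 := by
      intro m' hm'
      have hm'Icc : m' ∈ Finset.Icc 1 n := hsub (Finset.mem_insert_of_mem hm')
      rw [Finset.mem_Icc] at hm'Icc
      have h0 := hvan m' (Finset.mem_insert_of_mem hm')
      rw [hR, map_mul] at h0
      rcases mul_eq_zero.mp h0 with h1 | h1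
      · exfalso
        have hprim' : IsPrimitiveRoot (ζ ^ (p ^ (n - m'))) (p ^ m') := xi_prim hζ hp hm'Icc.2
        have h2 : Polynomial.eval (ζ ^ (p ^ (n - m'))) (Polynomial.cyclotomic (p ^ m) ℂ) = 0 := by
          rw [← Polynomial.map_cyclotomic (p ^ m) (algebraMap ℤ ℂ), Polynomial.eval_map, ← Polynomial.aeval_def]
          exact h1
        haveI : NeZero ((p ^ m : ℕ) : ℂ) := ⟨Nat.cast_ne_zero.mpr (pow_ne_zero m (by have := hp.pos; omega))⟩
        have h3 : IsPrimitiveRoot (ζ ^ (p ^ (n - m'))) (p ^ m) := Polynomial.isRoot_cyclotomic_iff.mp h2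
        have h4 : p ^ m = p ^ m' := h3.unique hprim'
        have heq := Nat.pow_right_injective hp.two_le h4
        rw [heq] at hm
        exact hm hm'
      · exact h1
    have hRdvd : (p : ℤ) ^ S.card ∣ R.eval 1 := ih R (fun x hx => hsub (Finset.mem_insert_of_mem hx)) hvanR
    rw [hR, Polynomial.eval_mul]
    rw [Finset.card_insert_of_notMem hm]
    obtain ⟨k, hk⟩ : ∃ k, m = k + 1 := ⟨m - 1, by omega⟩
    rw [hk]
    haveI : Fact p.Prime := ⟨hp⟩
    rw [Polynomial.eval_one_cyclotomic_prime_pow]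
    rw [pow_succ]
    obtain ⟨d, hd⟩ := hRdvd
    exact ⟨d, by rw [hd]; ring⟩

omit hζ hn in
/-- for a unit exponent, ζ^(a.val) is again a primitive (p^n)-th root -/
lemma unit_prim (hζ : IsPrimitiveRoot ζ (p ^ n)) (hp : p.Prime) {a : ZMod (p ^ n)}
    (ha : red p n a ≠ 0) : IsPrimitiveRoot (ζ ^ a.val) (p ^ n) := by
  apply hζ.pow_of_coprime
  have hnd : ¬ p ∣ a.val := fun hdvd => ha ((red_eq_zero_iff a).mpr hdvd)
  exact Nat.Coprime.pow_right n ((Nat.coprime_comm).mp ((hp.coprime_iff_not_dvd).mpr hnd))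

omit hζ hn in
/-- minimal order lemma for non-unit frequencies -/
lemma min_order (hζ : IsPrimitiveRoot ζ (p ^ n)) (hp : p.Prime) (hn : 1 ≤ n) {a : ZMod (p ^ n)}
    (ha0 : a ≠ 0) (hared : red p n a = 0) :
    ∃ m : ℕ, 1 ≤ m ∧ m ≤ n - 1 ∧ IsPrimitiveRoot (ζ ^ a.val) (p ^ m) ∧
      (ζ ^ a.val) ^ (p ^ m) = 1 ∧ (ζ ^ a.val) ^ (p ^ (m - 1)) ≠ 1 := by
  classical
  set ξ := ζ ^ a.val with hξ
  have hξq : ξ ^ (p ^ n) = 1 := by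
    rw [hξ, ← pow_mul, mul_comm, pow_mul, hζ.pow_eq_one, one_pow]
  have hξ1 : ξ ≠ 1 := by
    intro h1
    have hdv := (hζ.pow_eq_one_iff_dvd a.val).mp h1
    have hlt := ZMod.val_lt a
    have hv0 : a.val = 0 := Nat.eq_zero_of_dvd_of_lt hdv hlt
    exact ha0 ((ZMod.val_eq_zero a).mp hv0)
  set mset := (Finset.Icc 1 n).filter (fun m => ξ ^ (p ^ m) = 1) with hmset
  have hne : mset.Nonempty := ⟨n, by
    rw [hmset, Finset.mem_filter, Finset.mem_Icc]
    exact ⟨⟨hn, le_refl n⟩, hξq⟩⟩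
  set m := mset.min' hne with hm
  have hmmem : m ∈ mset := mset.min'_mem hne
  rw [Finset.mem_filter, Finset.mem_Icc] at hmmem
  obtain ⟨⟨hm1, hmn⟩, hmpow⟩ := hmmem
  have hmlow : ξ ^ (p ^ (m - 1)) ≠ 1 := by
    intro hcon
    rcases Nat.eq_or_lt_of_le hm1 with h | h
    · rw [show m - 1 = 0 from by omega, pow_zero, pow_one] at hcon
      exact hξ1 hcon
    · have : m - 1 ∈ mset := by
        rw [hmset, Finset.mem_filter, Finset.mem_Icc]
        exact ⟨⟨by omega, by omega⟩, hcon⟩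
      have := mset.min'_le _ this
      omega
  have hprim : IsPrimitiveRoot ξ (p ^ m) := by
    refine ⟨hmpow, ?_⟩
    intro l hl
    have hord1 : orderOf ξ ∣ p ^ m := orderOf_dvd_of_pow_eq_one hmpow
    obtain ⟨j, hj, hjord⟩ := (Nat.dvd_prime_pow hp).mp hord1
    have hjm : j = m := by
      by_contra hne2
      have hjlt : j ≤ m - 1 := by omega
      have : ξ ^ (p ^ (m - 1)) = 1 := by
        apply orderOf_dvd_iff_pow_eq_one.mp
        rw [hjord]
        exact pow_dvd_pow p hjlt
      exact hmlow this
    have : orderOf ξ ∣ l := orderOf_dvd_of_pow_eq_one hl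
    rw [hjord, hjm] at this
    exact this
  have hmtop : m ≤ n - 1 := by
    have hdvd : p ∣ a.val := (red_eq_zero_iff a).mp hared
    obtain ⟨t, ht⟩ := hdvd
    have hpow2 : ξ ^ (p ^ (n - 1)) = 1 := by
      rw [hξ, ← pow_mul, ht, show p * t * p ^ (n - 1) = t * p ^ n from by
        rw [mul_comm p t, mul_assoc, ← pow_succ']
        congr 2
        omega]
      rw [mul_comm, pow_mul, hζ.pow_eq_one, one_pow]
    have := hprim.dvd_of_pow_eq_one _ hpow2
    have := (Nat.pow_dvd_pow_iff_le_right hp.one_lt).mp this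
    exact this
  exact ⟨m, hm1, hmtop, hprim, hmpow, hmlow⟩

end Poly


section Dig

variable {p n : ℕ} [NeZero (p ^ n)] [NeZero p]

/-- digit set construction realizing prescribed vanishing -/
lemma dig (hp : 2 ≤ p) (hn : 1 ≤ n) :
    ∀ (k : ℕ) (S : Finset ℕ) (lo : ℕ), S.card = k → (∀ m ∈ S, lo < m ∧ m ≤ n - 1) →
    ∃ B : Finset (ZMod (p ^ n)),
      B.card = p ^ S.card ∧
      (∀ b ∈ B, b.val < p ^ (n - 1) ∧ p ^ lo ∣ b.val) ∧
      (∀ ξ : ℂ, (∃ m ∈ S, ξ ^ (p ^ m) = 1 ∧ ξ ^ (p ^ (m - 1)) ≠ 1) →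
        ∑ b ∈ B, ξ ^ b.val = 0) := by
  classical
  intro k
  induction k with
  | zero =>
    intro S lo hcard _
    rw [Finset.card_eq_zero] at hcard
    subst hcard
    refine ⟨{0}, by simp, ?_, ?_⟩
    · intro b hb
      rw [Finset.mem_singleton] at hb
      subst hb
      constructor
      · rw [ZMod.val_zero]
        exact Nat.pow_pos (n := _) (by omega)
      · rw [ZMod.val_zero]
        exact dvd_zero _
    · rintro ξ ⟨m, hm, _⟩
      exact absurd hm (by simp)
  | succ k ih =>
    intro S lo hcard hbound
    have hne : S.Nonempty := Finset.card_pos.mp (by omega)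
    set m := S.min' hne with hmdef
    have hmS : m ∈ S := S.min'_mem hne
    obtain ⟨hlom, hmn1⟩ := hbound m hmS
    set S' := S.erase m with hS'
    have hcard' : S'.card = k := by
      rw [hS', Finset.card_erase_of_mem hmS, hcard]
      omega
    have hbound' : ∀ m' ∈ S', m < m' ∧ m' ≤ n - 1 := by
      intro m' hm'
      have hm'S : m' ∈ S := Finset.mem_of_mem_erase hm'
      have hne' : m' ≠ m := Finset.ne_of_mem_erase hm'
      exact ⟨lt_of_le_of_ne (S.min'_le m' hm'S) (Ne.symm hne'), (hbound m' hm'S).2⟩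
    obtain ⟨B', hB'card, hB'val, hB'van⟩ := ih S' m hcard' hbound'
    set f : ZMod (p ^ n) × ℕ → ZMod (p ^ n) := fun z => z.1 + ((z.2 * p ^ (m - 1) : ℕ) : ZMod (p ^ n)) with hf
    set B := (B' ×ˢ Finset.range p).image f with hB
    have hval : ∀ b' ∈ B', ∀ j < p, (f (b', j)).val = b'.val + j * p ^ (m - 1) := by
      intro b' hb' j hj
      obtain ⟨hb'lt, hb'dvd⟩ := hB'val b' hb'
      have hjlt : j * p ^ (m - 1) < p ^ m := by
        calc j * p ^ (m - 1) ≤ (p - 1) * p ^ (m - 1) := Nat.mul_le_mul_right _ (by omega)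
        _ < p * p ^ (m - 1) := by
            have hpos : 0 < p ^ (m - 1) := Nat.pow_pos (n := _) (by omega)
            have : p - 1 < p := by omega
            exact Nat.mul_lt_mul_of_lt_of_le this (le_refl _) hpos
        _ = p ^ m := by rw [← pow_succ']; congr 1; omega
      have hpm : p ^ m ≤ p ^ (n - 1) := Nat.pow_le_pow_right (by omega) hmn1
      have hsumlt : b'.val + j * p ^ (m - 1) < p ^ n := by
        have h2 : p ^ (n - 1) + p ^ (n - 1) ≤ p ^ n := by
          have : p ^ n = p ^ (n - 1) * p := by rw [← pow_succ]; congr 1; omega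
          rw [this]
          nlinarith [Nat.pow_pos (n := (n - 1)) (show 0 < p from by omega)]
        omega
      rw [hf]
      simp only
      rw [ZMod.val_add, ZMod.val_natCast]
      rw [Nat.mod_eq_of_lt (lt_of_lt_of_le hjlt (le_trans hpm (Nat.pow_le_pow_right (by omega) (by omega))))]
      exact Nat.mod_eq_of_lt hsumlt
    have hinj : Set.InjOn f ↑(B' ×ˢ Finset.range p) := by
      intro z1 hz1 z2 hz2 heq
      rw [Finset.coe_product] at hz1 hz2
      obtain ⟨hz11, hz12⟩ := hz1
      obtain ⟨hz21, hz22⟩ := hz2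
      simp only [Finset.mem_coe, Finset.coe_range, Set.mem_Iio] at hz11 hz12 hz21 hz22
      have hv1 : (f z1).val = z1.1.val + z1.2 * p ^ (m - 1) := hval z1.1 hz11 z1.2 hz12
      have hv2 : (f z2).val = z2.1.val + z2.2 * p ^ (m - 1) := hval z2.1 hz21 z2.2 hz22
      have hnat : z1.1.val + z1.2 * p ^ (m - 1) = z2.1.val + z2.2 * p ^ (m - 1) := by
        rw [← hv1, ← hv2, heq]
      obtain ⟨t1, ht1⟩ := (hB'val z1.1 hz11).2
      obtain ⟨t2, ht2⟩ := (hB'val z2.1 hz21).2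
      rw [ht1, ht2] at hnat
      have hps : p ^ m = p ^ (m - 1) * p := by rw [← pow_succ]; congr 1; omega
      rw [hps] at hnat
      have hm1pos : 0 < p ^ (m - 1) := Nat.pow_pos (n := _) (by omega)
      have hnat2 : p * t1 + z1.2 = p * t2 + z2.2 := by
        apply Nat.eq_of_mul_eq_mul_left hm1pos
        have e1 : p ^ (m-1) * (p * t1 + z1.2) = p ^ (m-1) * p * t1 + z1.2 * p ^ (m-1) := by ring
        have e2 : p ^ (m-1) * (p * t2 + z2.2) = p ^ (m-1) * p * t2 + z2.2 * p ^ (m-1) := by ring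
        rw [e1, e2]
        exact hnat
      have hj : z1.2 = z2.2 := by
        have e1 : (p * t1 + z1.2) % p = z1.2 := by
          rw [Nat.mul_add_mod]
          exact Nat.mod_eq_of_lt hz12
        have e2 : (p * t2 + z2.2) % p = z2.2 := by
          rw [Nat.mul_add_mod]
          exact Nat.mod_eq_of_lt hz22
        rw [← e1, ← e2, hnat2]
      have hb : z1.1 = z2.1 := by
        have hpt : p * t1 = p * t2 := by omega
        have ht12 : t1 = t2 := Nat.eq_of_mul_eq_mul_left (by omega) hpt
        have : z1.1.val = z2.1.val := by rw [ht1, ht2, ht12]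
        calc z1.1 = ((z1.1.val : ℕ) : ZMod (p ^ n)) := (ZMod.natCast_rightInverse z1.1).symm
        _ = ((z2.1.val : ℕ) : ZMod (p ^ n)) := by rw [this]
        _ = z2.1 := ZMod.natCast_rightInverse z2.1
      exact Prod.ext hb hj
    refine ⟨B, ?_, ?_, ?_⟩
    · rw [hB, Finset.card_image_of_injOn hinj, Finset.card_product, Finset.card_range,
        hB'card, hcard', hcard, pow_succ]
    · intro b hb
      rw [hB, Finset.mem_image] at hb
      obtain ⟨z, hz, rfl⟩ := hb
      rw [Finset.mem_product, Finset.mem_range] at hz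
      have hv := hval z.1 hz.1 z.2 hz.2
      obtain ⟨hlt, hdvd⟩ := hB'val z.1 hz.1
      constructor
      · rw [show (z.1, z.2) = z from rfl] at hv
        rw [hv]
        -- b'.val + j p^{m-1} < p^{n-1} using p^m ∣ b'.val
        obtain ⟨t, ht⟩ := hdvd
        have hjlt : z.2 * p ^ (m - 1) < p ^ m := by
          calc z.2 * p ^ (m - 1) ≤ (p - 1) * p ^ (m - 1) := Nat.mul_le_mul_right _ (by omega)
          _ < p * p ^ (m - 1) := by
              have hpos : 0 < p ^ (m - 1) := Nat.pow_pos (n := _) (by omega)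
              have : p - 1 < p := by omega
              exact Nat.mul_lt_mul_of_lt_of_le this (le_refl _) hpos
          _ = p ^ m := by rw [← pow_succ']; congr 1; omega
        have hmax : z.1.val ≤ p ^ (n - 1) - p ^ m := by
          rw [ht]
          have h1 : p ^ m * t < p ^ (n - 1) := by rw [← ht]; exact hlt
          have h2 : p ^ (n - 1) = p ^ m * p ^ (n - 1 - m) := by
            rw [← pow_add]; congr 1; omega
          rw [h2] at h1 ⊢
          have hpmpos : 0 < p ^ m := Nat.pow_pos (n := _) (by omega)
          have ht' : t < p ^ (n - 1 - m) := by
            by_contra hcon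
            push_neg at hcon
            exact absurd (Nat.mul_le_mul_left (p ^ m) hcon) (by omega)
          calc p ^ m * t ≤ p ^ m * (p ^ (n - 1 - m) - 1) := Nat.mul_le_mul_left _ (by omega)
          _ = p ^ m * p ^ (n - 1 - m) - p ^ m := by
              rw [Nat.mul_sub, mul_one]
        have hpmle : p ^ m ≤ p ^ (n - 1) := Nat.pow_le_pow_right (by omega) hmn1
        omega
      · rw [show (z.1, z.2) = z from rfl] at hv
        rw [hv]
        apply Nat.dvd_add
        · exact dvd_trans (pow_dvd_pow p (by omega)) hdvd
        · exact Dvd.dvd.mul_left (pow_dvd_pow p (by omega)) z.2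
    · rintro ξ ⟨m0, hm0S, hm0pow, hm0low⟩
      rw [hB, Finset.sum_image (fun x hx y hy hxy => hinj (Finset.mem_coe.mpr hx) (Finset.mem_coe.mpr hy) hxy)]
      have hterm : ∀ z ∈ B' ×ˢ Finset.range p, ξ ^ (f z).val = ξ ^ z.1.val * (ξ ^ (p ^ (m - 1))) ^ z.2 := by
        intro z hz
        rw [Finset.mem_product, Finset.mem_range] at hz
        rw [show (f z).val = z.1.val + z.2 * p ^ (m - 1) from hval z.1 hz.1 z.2 hz.2]
        rw [pow_add]
        congr 1
        rw [mul_comm z.2 (p ^ (m - 1)), pow_mul]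
      rw [Finset.sum_congr rfl hterm, Finset.sum_product]
      by_cases hcase : m0 = m
      · -- the new factor vanishes
        rw [hcase] at hm0pow hm0low
        have hgeo : ∑ j ∈ Finset.range p, (ξ ^ (p ^ (m - 1))) ^ j = 0 := by
          rw [geom_sum_eq (by exact hm0low)]
          rw [← pow_mul, ← pow_succ, show m - 1 + 1 = m from by omega, hm0pow]
          simp
        have hfac : ∀ b' ∈ B', ∑ j ∈ Finset.range p, ξ ^ b'.val * (ξ ^ (p ^ (m - 1))) ^ j
            = ξ ^ b'.val * ∑ j ∈ Finset.range p, (ξ ^ (p ^ (m - 1))) ^ j := by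
          intro b' _
          rw [Finset.mul_sum]
        rw [Finset.sum_congr rfl hfac]
        simp [hgeo]
      · -- old part vanishes
        have hm0S' : m0 ∈ S' := Finset.mem_erase.mpr ⟨hcase, hm0S⟩
        have hvan := hB'van ξ ⟨m0, hm0S', hm0pow, hm0low⟩
        have hfac : ∀ b' ∈ B', ∑ j ∈ Finset.range p, ξ ^ b'.val * (ξ ^ (p ^ (m - 1))) ^ j
            = ξ ^ b'.val * ∑ j ∈ Finset.range p, (ξ ^ (p ^ (m - 1))) ^ j := by
          intro b' _
          rw [Finset.mul_sum]
        rw [Finset.sum_congr rfl hfac, ← Finset.sum_mul, hvan, zero_mul]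

end Dig


section Assemble

variable {p n : ℕ} [NeZero (p ^ n)] [NeZero p]
variable {ζ : ℂ}

/-- the distinguished period element u = (p^(n-1), 0) -/
def uelt (p n : ℕ) : ZMod (p ^ n) × ZMod p := ((p : ZMod (p ^ n)) ^ (n - 1), 0)

lemma uelt_ne_zero (hp : 2 ≤ p) (hn : 1 ≤ n) : uelt p n ≠ 0 := by
  intro h
  have h1 : (p : ZMod (p ^ n)) ^ (n - 1) = 0 := congrArg Prod.fst h
  have h2 : ((p ^ (n - 1) : ℕ) : ZMod (p ^ n)) = 0 := by push_cast; exact h1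
  rw [ZMod.natCast_eq_zero_iff] at h2
  have hlt : p ^ (n - 1) < p ^ n := Nat.pow_lt_pow_right (by omega) (by omega)
  have hpos : 0 < p ^ (n - 1) := Nat.pow_pos (n := _) (by omega)
  have := Nat.le_of_dvd hpos h2
  omega

lemma lift1_sub (hn : 1 ≤ n) (s t : ZMod p) :
    lift1 p n (s - t) = lift1 p n s - lift1 p n t := by
  have h := lift1_add (p := p) hn (s - t) t
  rw [sub_add_cancel] at h
  exact eq_sub_of_add_eq h.symm

variable (hζ : IsPrimitiveRoot ζ (p ^ n)) (hn : 1 ≤ n) (hp : p.Prime)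
include hζ hn hp

lemma chi_u_eq_one_iff (ab : ZMod (p ^ n) × ZMod p) :
    chi ζ ab (uelt p n) = 1 ↔ red p n ab.1 = 0 := by
  have hkap : kap p n ab.1 ab.2 (uelt p n) = lift1 p n (red p n ab.1) := by
    unfold kap uelt
    simp only [mul_zero]
    rw [lift1_zero hn, add_zero]
    unfold lift1
    rw [mul_comm]
    apply pow_mul_eq_of_red_eq hn
    rw [red_lift_val hn]
  unfold chi
  rw [hkap, ee_eq_one_iff hζ, lift1_eq_zero_iff hp.two_le hn]

/-- slope characters vanish when the mask polynomial is divisible -/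
lemma slope_vanish (OF : Finset (ZMod (p ^ n) × ZMod p)) (c : ZMod p)
    (hdvd : Polynomial.cyclotomic (p ^ n) ℤ ∣ Pc OF c)
    (a : ZMod (p ^ n)) (ha : red p n a ≠ 0) : FH ζ OF (a, c * red p n a) = 0 := by
  rw [← Pc_aeval hζ hn]
  exact aeval_of_cyclo_dvd (unit_prim hζ hp ha) hp hdvd

lemma slope_nonvanish (OF : Finset (ZMod (p ^ n) × ZMod p)) (c : ZMod p)
    (hnd : ¬ Polynomial.cyclotomic (p ^ n) ℤ ∣ Pc OF c)
    (a : ZMod (p ^ n)) (ha : red p n a ≠ 0) : FH ζ OF (a, c * red p n a) ≠ 0 := by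
  intro h0
  apply hnd
  refine cyclo_dvd_of_aeval (by omega) (unit_prim hζ hp ha) hp ?_
  rw [Pc_aeval hζ hn]
  exact h0

omit hζ hn hp in
lemma slope_decomp (hp : p.Prime) {a : ZMod (p ^ n)} (b : ZMod p) (ha : red p n a ≠ 0) :
    (b * (red p n a)⁻¹) * red p n a = b := by
  haveI : Fact p.Prime := ⟨hp⟩
  rw [mul_assoc, inv_mul_cancel₀ ha, mul_one]

end Assemble


section Helt

variable {p n : ℕ} [NeZero (p ^ n)] [NeZero p]
variable {ζ : ℂ}

/-- the period element for the dual construction -/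
def helt (p n : ℕ) (c₁ : ZMod p) : ZMod (p ^ n) × ZMod p :=
  (-(((c₁.val : ℕ) : ZMod (p ^ n)) * (p : ZMod (p ^ n)) ^ (n - 1)), 1)

lemma helt_ne_zero (hp : 2 ≤ p) : helt p n c₁ ≠ 0 := by
  intro h
  have h2 : (1 : ZMod p) = 0 := congrArg Prod.snd h
  haveI : Fact (1 < p) := ⟨by omega⟩
  exact one_ne_zero h2

lemma p_smul_helt (hp : 2 ≤ p) (hn : 1 ≤ n) (c₁ : ZMod p) : p • helt p n c₁ = 0 := by
  have h1 : p • (helt p n c₁).1 = 0 := by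
    rw [nsmul_eq_mul]
    unfold helt
    simp only
    rw [mul_neg, neg_eq_zero, ← mul_assoc, mul_comm ((p : ZMod (p ^ n))) (((c₁.val : ℕ) : ZMod (p ^ n))), mul_assoc, ← pow_succ']
    rw [show n - 1 + 1 = n from by omega]
    rw [show ((p : ZMod (p ^ n)) ^ n) = ((p ^ n : ℕ) : ZMod (p ^ n)) from by push_cast; ring]
    rw [ZMod.natCast_self, mul_zero]
  have h2 : p • (helt p n c₁).2 = 0 := by
    rw [nsmul_eq_mul]
    unfold helt
    simp only [mul_one]
    exact ZMod.natCast_self p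
  have : p • helt p n c₁ = (p • (helt p n c₁).1, p • (helt p n c₁).2) := rfl
  rw [this, h1, h2]
  rfl

variable (hζ : IsPrimitiveRoot ζ (p ^ n)) (hn : 1 ≤ n) (hp : p.Prime)
include hζ hn hp

lemma chi_helt_eq_one_iff (c₁ : ZMod p) (ab : ZMod (p ^ n) × ZMod p) :
    chi ζ ab (helt p n c₁) = 1 ↔ ab.2 = c₁ * red p n ab.1 := by
  have hc1pn : ((c₁.val : ℕ) : ZMod (p ^ n)) * (p : ZMod (p ^ n)) ^ (n - 1) = lift1 p n c₁ := by
    unfold lift1; ring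
  have hkap : kap p n ab.1 ab.2 (helt p n c₁) = lift1 p n (ab.2 - red p n ab.1 * c₁) := by
    unfold kap helt
    simp only [mul_one, mul_neg]
    rw [hc1pn, mul_lift1 hn, lift1_sub hn]
    ring
  unfold chi
  rw [hkap, ee_eq_one_iff hζ, lift1_eq_zero_iff hp.two_le hn, sub_eq_zero, mul_comm (red p n ab.1) c₁]

omit hζ hn hp in
lemma nsmul_mod (hp : 2 ≤ p) (hn : 1 ≤ n) (c₁ : ZMod p) (k : ℕ) :
    k • helt p n c₁ = (k % p) • helt p n c₁ := by
  conv_lhs => rw [← Nat.div_add_mod k p]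
  rw [add_nsmul, mul_comm, mul_nsmul]
  rw [smul_comm p (k / p) (helt p n c₁)]
  rw [show p • helt p n c₁ = 0 from p_smul_helt hp hn c₁, smul_zero, zero_add]

end Helt


end UPTaux

open UPTaux in
/-- For every prime `p` and `n ≥ 1`, the group `Z_{p^n} × Z_p` has the UPT
property. -/
theorem hasUPT_zmod_pow_prod (p : ℕ) (hp : p.Prime) (n : ℕ) (hn : 1 ≤ n) :
    HasUPT (ZMod (p ^ n) × ZMod p) := by
  classical
  haveI : NeZero p := ⟨by have := hp.two_le; omega⟩
  haveI : NeZero (p ^ n) := ⟨pow_ne_zero n (by have := hp.two_le; omega)⟩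
  obtain ⟨ζ, hζ⟩ : ∃ ζ : ℂ, IsPrimitiveRoot ζ (p ^ n) :=
    ⟨_, Complex.isPrimitiveRoot_exp _ (pow_ne_zero n (by have := hp.two_le; omega))⟩
  intro Ω hΩtile
  obtain ⟨T, hT⟩ := hΩtile
  set OF := (Set.toFinite Ω).toFinset with hOFdef
  have hred0 : red p n (0 : ZMod (p ^ n)) = 0 := by
    show ((0 : ZMod (p ^ n)).val : ZMod p) = 0
    rw [ZMod.val_zero]
    push_cast
    rfl
  by_cases hC1 : ∀ c : ZMod p, ¬ Polynomial.cyclotomic (p ^ n) ℤ ∣ Pc OF c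
  · -- uniformly periodic with period u
    left
    refine ⟨uelt p n, uelt_ne_zero hp.two_le hn, ?_⟩
    intro T' hT'
    have hper := periodic_of_fourier hζ hn hp (Set.toFinite T').toFinset (uelt p n) ?_
    · rw [(Set.toFinite T').coe_toFinset] at hper
      exact hper
    · intro ab hab
      have hared : red p n ab.1 ≠ 0 := fun h => hab ((chi_u_eq_one_iff hζ hn hp ab).mpr h)
      have habne : ab ≠ 0 := by
        intro h
        apply hared
        rw [h]
        exact hred0
      have hprod := tiling_fourier hζ hn hp hT' habne
      have hne : FH ζ OF ab ≠ 0 := by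
        have h2 := slope_nonvanish hζ hn hp OF (ab.2 * (red p n ab.1)⁻¹) (hC1 _) ab.1 hared
        rw [slope_decomp hp ab.2 hared, Prod.mk.eta] at h2
        exact h2
      exact (mul_eq_zero.mp hprod).resolve_left hne
  by_cases hC2 : ∀ c : ZMod p, Polynomial.cyclotomic (p ^ n) ℤ ∣ Pc OF c
  · -- Ω itself is periodic
    right
    have hper : (fun a => a + uelt p n) '' Ω = Ω := by
      have hper' := periodic_of_fourier hζ hn hp OF (uelt p n) ?_
      · rw [hOFdef, (Set.toFinite Ω).coe_toFinset] at hper'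
        exact hper'
      · intro ab hab
        have hared : red p n ab.1 ≠ 0 := fun h => hab ((chi_u_eq_one_iff hζ hn hp ab).mpr h)
        have h2 := slope_vanish hζ hn hp OF (ab.2 * (red p n ab.1)⁻¹) (hC2 _) ab.1 hared
        rw [slope_decomp hp ab.2 hared, Prod.mk.eta] at h2
        exact h2
    have hΩne : Ω.Nonempty := by
      obtain ⟨pr, hpr⟩ := (hT 0).exists
      exact ⟨pr.1, hpr.1⟩
    exact ⟨Ω, ⟨hΩne, uelt p n, uelt_ne_zero hp.two_le hn, hper⟩, ⟨T, hT⟩, fun T' h' => h'⟩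
  -- main case
  right
  push_neg at hC1
  obtain ⟨c₀, hc₀⟩ := hC1
  obtain ⟨c₁, hc₁⟩ := not_forall.mp hC2
  have hcardT := tiling_card hn hp hT
  have hdvdcard : OF.card ∣ p ^ (n + 1) := ⟨(Set.toFinite T).toFinset.card, by rw [pow_succ, ← hcardT]⟩
  obtain ⟨A, hAle, hcardA⟩ := (Nat.dvd_prime_pow hp).mp hdvdcard
  set 𝒱 := (Finset.Icc 1 n).filter (fun m => Polynomial.cyclotomic (p ^ m) ℤ ∣ Pc OF c₀) with h𝒱
  have hn𝒱 : n ∈ 𝒱 := Finset.mem_filter.mpr ⟨Finset.mem_Icc.mpr ⟨hn, le_refl n⟩, hc₀⟩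
  have h𝒱sub : 𝒱 ⊆ Finset.Icc 1 n := Finset.filter_subset _ _
  have hkcl := kcl hζ hp 𝒱 (Pc OF c₀) h𝒱sub (by
    intro m hm
    have hmm := Finset.mem_filter.mp hm
    exact aeval_of_cyclo_dvd (xi_prim hζ hp (Finset.mem_Icc.mp hmm.1).2) hp hmm.2)
  rw [Pc_eval_one, hcardA] at hkcl
  have hVA : 𝒱.card ≤ A := by
    have hg : ((p ^ 𝒱.card : ℕ) : ℤ) ∣ ((p ^ A : ℕ) : ℤ) := by push_cast; exact_mod_cast hkcl
    exact (Nat.pow_dvd_pow_iff_le_right hp.one_lt).mp (Int.ofNat_dvd.mp hg)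
  have hA1 : 1 ≤ A := le_trans (Finset.card_pos.mpr ⟨n, hn𝒱⟩) hVA
  have hAn : A ≤ n := by
    by_contra hcon
    have hOFuniv : OF = Finset.univ := by
      apply Finset.eq_univ_of_card
      rw [hcardA, show A = n + 1 from by omega, Fintype.card_prod, ZMod.card, ZMod.card, pow_succ]
    apply hc₁
    have hone : red p n (1 : ZMod (p ^ n)) ≠ 0 := by
      rw [show (1 : ZMod (p ^ n)) = ((1 : ℕ) : ZMod (p ^ n)) from by push_cast; rfl,
        red_natCast hn]
      haveI : Fact (1 < p) := ⟨hp.one_lt⟩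
      push_cast
      exact one_ne_zero
    refine cyclo_dvd_of_aeval (show 0 < n from by omega) (unit_prim hζ hp hone) hp ?_
    rw [Pc_aeval hζ hn, hOFuniv]
    have habne : (((1 : ZMod (p ^ n)), c₁ * red p n 1) : ZMod (p ^ n) × ZMod p) ≠ 0 := by
      intro h
      have h1 : (1 : ZMod (p ^ n)) = 0 := congrArg Prod.fst h
      haveI : Fact (1 < p ^ n) := ⟨by
        have := hp.two_le
        calc 1 < 2 := by omega
        _ ≤ p := this
        _ ≤ p ^ n := Nat.le_self_pow (by omega) p⟩
      exact one_ne_zero h1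
    have hsc := sum_chi hζ hn hp (((1 : ZMod (p ^ n)), c₁ * red p n 1))
    rw [if_neg habne] at hsc
    exact hsc
  -- build the digit set
  have herasesub : 𝒱.erase n ⊆ Finset.Icc 1 (n - 1) := by
    intro m hm
    have h1 := Finset.mem_of_mem_erase hm
    have h2 := Finset.ne_of_mem_erase hm
    have h3 := Finset.mem_Icc.mp (h𝒱sub h1)
    exact Finset.mem_Icc.mpr ⟨h3.1, by omega⟩
  have hcarderase : (𝒱.erase n).card ≤ A - 1 := by
    rw [Finset.card_erase_of_mem hn𝒱]
    omega
  have hIcccard : A - 1 ≤ (Finset.Icc 1 (n - 1)).card := by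
    rw [Nat.card_Icc]
    omega
  obtain ⟨𝒱', h𝒱'sub1, h𝒱'sub2, h𝒱'card⟩ :=
    Finset.exists_subsuperset_card_eq herasesub hcarderase hIcccard
  obtain ⟨B, hBcard, hBval, hBvan⟩ := dig hp.two_le hn 𝒱'.card 𝒱' 0 rfl (by
    intro m hm
    have := Finset.mem_Icc.mp (h𝒱'sub2 hm)
    exact ⟨by omega, this.2⟩)
  rw [h𝒱'card] at hBcard
  -- the periodic dual set
  set f : ZMod (p ^ n) × ZMod p → ZMod (p ^ n) × ZMod p :=
    fun z => (z.1, (0 : ZMod p)) + z.2.val • helt p n c₁ with hfd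
  set OFp := (B ×ˢ (Finset.univ : Finset (ZMod p))).image f with hOFp
  have hsnd : ∀ z : ZMod (p ^ n) × ZMod p, (f z).2 = z.2 := by
    intro z
    show ((z.1, (0 : ZMod p)) + z.2.val • helt p n c₁).2 = z.2
    rw [Prod.snd_add]
    show (0 : ZMod p) + z.2.val • (helt p n c₁).2 = z.2
    show (0 : ZMod p) + z.2.val • (1 : ZMod p) = z.2
    rw [zero_add, nsmul_eq_mul, mul_one]
    exact ZMod.natCast_rightInverse z.2
  have hinj : Set.InjOn f ↑(B ×ˢ (Finset.univ : Finset (ZMod p))) := by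
    intro z1 _ z2 _ heq
    have h2 : z1.2 = z2.2 := by rw [← hsnd z1, ← hsnd z2, heq]
    have h1 : z1.1 = z2.1 := by
      have hfst := congrArg Prod.fst heq
      show z1.1 = z2.1
      have e1 : (f z1).1 = z1.1 + (z1.2.val • helt p n c₁).1 := by
        show ((z1.1, (0 : ZMod p)) + z1.2.val • helt p n c₁).1 = _
        rw [Prod.fst_add]
      have e2 : (f z2).1 = z2.1 + (z2.2.val • helt p n c₁).1 := by
        show ((z2.1, (0 : ZMod p)) + z2.2.val • helt p n c₁).1 = _
        rw [Prod.fst_add]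
      rw [e1, e2, h2] at hfst
      exact add_right_cancel hfst
    exact Prod.ext h1 h2
  have hOFpcard : OFp.card = p ^ A := by
    rw [hOFp, Finset.card_image_of_injOn hinj, Finset.card_product, Finset.card_univ, ZMod.card,
      hBcard, ← pow_succ]
    congr 1
    omega
  have hchip : ∀ ab : ZMod (p ^ n) × ZMod p, (chi ζ ab (helt p n c₁)) ^ p = 1 := by
    intro ab
    rw [← chi_nsmul hζ hn, p_smul_helt hp.two_le hn c₁]
    exact chi_zero_right hn ab
  have hFHfac : ∀ ab : ZMod (p ^ n) × ZMod p,
      FH ζ OFp ab = (∑ b ∈ B, (ζ ^ ab.1.val) ^ b.val) *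
        (∑ j : ZMod p, (chi ζ ab (helt p n c₁)) ^ j.val) := by
    intro ab
    rw [hOFp]
    unfold FH
    rw [Finset.sum_image (fun x hx y hy hxy => hinj (Finset.mem_coe.mpr hx) (Finset.mem_coe.mpr hy) hxy)]
    have hterm : ∀ z ∈ B ×ˢ (Finset.univ : Finset (ZMod p)),
        chi ζ ab (f z) = (ζ ^ ab.1.val) ^ z.1.val * (chi ζ ab (helt p n c₁)) ^ z.2.val := by
      intro z _
      show chi ζ ab ((z.1, (0 : ZMod p)) + z.2.val • helt p n c₁) = _
      rw [chi_add hζ hn, chi_nsmul hζ hn]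
      congr 1
      show ee ζ (kap p n ab.1 ab.2 (z.1, (0 : ZMod p))) = _
      unfold kap
      simp only [mul_zero]
      rw [lift1_zero hn, add_zero]
      exact ee_mul_val (hζpow hζ) ab.1 z.1
    rw [Finset.sum_congr rfl hterm, Finset.sum_product]
    exact (Finset.sum_mul_sum B (Finset.univ : Finset (ZMod p))
      (fun b => (ζ ^ ab.1.val) ^ b.val) (fun j => (chi ζ ab (helt p n c₁)) ^ j.val)).symm
  have hcover : ∀ ab : ZMod (p ^ n) × ZMod p, ab ≠ 0 → FH ζ OF ab = 0 → FH ζ OFp ab = 0 := by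
    intro ab habne hOF0
    rw [hFHfac ab]
    by_cases hch : chi ζ ab (helt p n c₁) = 1
    · have hab2 : ab.2 = c₁ * red p n ab.1 := (chi_helt_eq_one_iff hζ hn hp c₁ ab).mp hch
      by_cases hared : red p n ab.1 = 0
      · have hb20 : ab.2 = 0 := by rw [hab2, hared, mul_zero]
        have ha10 : ab.1 ≠ 0 := fun h => habne (Prod.ext h hb20)
        obtain ⟨m, hm1, hmn1, hprim, hpow, hlow⟩ := min_order hζ hp hn ha10 hared
        have hOFeval : Polynomial.aeval (ζ ^ ab.1.val) (Pc OF c₀) = 0 := by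
          rw [Pc_aeval hζ hn, hared, mul_zero]
          rw [show ((ab.1, (0 : ZMod p)) : ZMod (p ^ n) × ZMod p) = ab from by
            rw [← hb20]]
          exact hOF0
        have hdm : Polynomial.cyclotomic (p ^ m) ℤ ∣ Pc OF c₀ :=
          cyclo_dvd_of_aeval (by omega) hprim hp hOFeval
        have hm𝒱' : m ∈ 𝒱' := by
          apply h𝒱'sub1
          apply Finset.mem_erase.mpr
          refine ⟨by omega, ?_⟩
          exact Finset.mem_filter.mpr ⟨Finset.mem_Icc.mpr ⟨hm1, by omega⟩, hdm⟩
        rw [hBvan (ζ ^ ab.1.val) ⟨m, hm𝒱', hpow, hlow⟩, zero_mul]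
      · exfalso
        have h2 := slope_nonvanish hζ hn hp OF c₁ hc₁ ab.1 hared
        rw [← hab2, Prod.mk.eta] at h2
        exact h2 hOF0
    · have hgeo : ∑ j : ZMod p, (chi ζ ab (helt p n c₁)) ^ j.val = 0 := by
        rw [geo_zmod (hchip ab), if_neg hch]
      rw [hgeo, mul_zero]
  have hOFpper : (fun a => a + helt p n c₁) '' (↑OFp : Set (ZMod (p ^ n) × ZMod p)) = ↑OFp := by
    have hsubset : OFp.image (fun a => a + helt p n c₁) ⊆ OFp := by
      intro x hx
      rw [Finset.mem_image] at hx
      obtain ⟨y, hy, rfl⟩ := hx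
      rw [hOFp, Finset.mem_image] at hy ⊢
      obtain ⟨z, hz, rfl⟩ := hy
      refine ⟨(z.1, z.2 + 1), ?_, ?_⟩
      · rw [Finset.mem_product] at hz ⊢
        exact ⟨hz.1, Finset.mem_univ _⟩
      · show (z.1, (0 : ZMod p)) + (z.2 + 1).val • helt p n c₁
          = (z.1, (0 : ZMod p)) + z.2.val • helt p n c₁ + helt p n c₁
        rw [add_assoc]
        congr 1
        rw [← succ_nsmul]
        rw [nsmul_mod hp.two_le hn c₁ ((z.2 + 1).val), nsmul_mod hp.two_le hn c₁ (z.2.val + 1)]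
        congr 1
        haveI : Fact (1 < p) := ⟨hp.one_lt⟩
        rw [ZMod.val_add, ZMod.val_one]
        exact Nat.mod_mod_of_dvd _ dvd_rfl
    have hcardim : (OFp.image (fun a => a + helt p n c₁)).card = OFp.card :=
      Finset.card_image_of_injective _ (add_left_injective _)
    have heqq : OFp.image (fun a => a + helt p n c₁) = OFp :=
      Finset.eq_of_subset_of_card_le hsubset (by rw [hcardim])
    rw [← Finset.coe_image, heqq]
  have htile' : ∀ T' : Set (ZMod (p ^ n) × ZMod p), IsTilingPair Ω T' →
      IsTilingPair (↑OFp : Set (ZMod (p ^ n) × ZMod p)) T' := by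
    intro T' hT'
    have hcards := tiling_card hn hp hT'
    have hres := tiling_of_fourier hζ hn hp OFp (Set.toFinite T').toFinset
      (by rw [hOFpcard, ← hcardA]; exact hcards)
      (by
        intro ab habne
        by_cases h0 : FH ζ OF ab = 0
        · rw [hcover ab habne h0, zero_mul]
        · have hprod := tiling_fourier hζ hn hp hT' habne
          rw [(mul_eq_zero.mp hprod).resolve_left h0, mul_zero])
    rw [(Set.toFinite T').coe_toFinset] at hres
    exact hres
  have hOFpne : (↑OFp : Set (ZMod (p ^ n) × ZMod p)).Nonempty := by
    have hpos : 0 < OFp.card := by rw [hOFpcard]; exact Nat.pow_pos (n := _) hp.pos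
    obtain ⟨x, hx⟩ := Finset.card_pos.mp hpos
    exact ⟨x, hx⟩
  exact ⟨↑OFp, ⟨hOFpne, helt p n c₁, helt_ne_zero hp.two_le, hOFpper⟩, ⟨T, htile' T hT⟩, htile'⟩
end
end

section
/- Let p be a prime and let Ω be a non-trivial tile of the group G = (Z_p)^3 (i.e., 1 < |Ω| < p^3) with 0 ∈ Ω. Then there exists a subgroup Ω' of G such that (Ω', T) is a tiling pair of G for every tiling complement T ∈ 𝒯_Ω. -/
namespace TileAux

open Finset Polynomial

variable {p : ℕ}

lemma pow_val_mod {ζ : ℂ} (hζ : ζ ^ p = 1) (m : ℕ) : ζ ^ (m % p) = ζ ^ m := by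
  conv_rhs => rw [← Nat.div_add_mod m p]
  rw [pow_add, pow_mul, hζ, one_pow, one_mul]

lemma e_add [NeZero p] {ζ : ℂ} (hζ : ζ ^ p = 1) (u v : ZMod p) :
    ζ ^ (u + v).val = ζ ^ u.val * ζ ^ v.val := by
  rw [ZMod.val_add, pow_val_mod hζ, pow_add]

lemma zmod_sum_range [NeZero p] {M : Type*} [AddCommMonoid M] (f : ZMod p → M) :
    ∑ j : ZMod p, f j = ∑ i ∈ Finset.range p, f (i : ZMod p) := by
  apply Finset.sum_nbij' (fun j : ZMod p => j.val) (fun i : ℕ => (i : ZMod p))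
  · intro a _; exact Finset.mem_range.2 (ZMod.val_lt a)
  · intro a _; exact Finset.mem_univ _
  · intro a _; rw [ZMod.natCast_val, ZMod.cast_id]
  · intro a ha; exact ZMod.val_cast_of_lt (Finset.mem_range.1 ha)
  · intro a _; rw [ZMod.natCast_val, ZMod.cast_id]

lemma esum [NeZero p] (hp : p.Prime) {ζ : ℂ} (hζ : IsPrimitiveRoot ζ p) :
    ∑ x : ZMod p, ζ ^ x.val = 0 := by
  haveI : NeZero p := ⟨hp.ne_zero⟩
  rw [zmod_sum_range (fun x : ZMod p => ζ ^ x.val)]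
  rw [Finset.sum_congr rfl fun i hi => by
    rw [ZMod.val_cast_of_lt (Finset.mem_range.1 hi)]]
  exact hζ.geom_sum_eq_zero hp.one_lt

lemma sum_const_of_sum_root_eq_zero [NeZero p] (hp : p.Prime) {ζ : ℂ} (hζ : IsPrimitiveRoot ζ p)
    (c : ZMod p → ℕ) (h : ∑ j : ZMod p, (c j : ℂ) * ζ ^ j.val = 0) :
    ∀ i j : ZMod p, c i = c j := by
  haveI : NeZero p := ⟨hp.ne_zero⟩
  set L : ℕ := c ((p - 1 : ℕ) : ZMod p) with hL
  have hrange : ∑ i ∈ Finset.range p, ((c (i : ZMod p) : ℂ)) * ζ ^ i = 0 := by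
    rw [← h, zmod_sum_range (fun j : ZMod p => (c j : ℂ) * ζ ^ j.val)]
    exact Finset.sum_congr rfl fun i hi => by
      rw [ZMod.val_cast_of_lt (Finset.mem_range.1 hi)]
  have hgeom : ∑ i ∈ Finset.range p, ζ ^ i = 0 := hζ.geom_sum_eq_zero hp.one_lt
  have h2 : ∑ i ∈ Finset.range p, ((c (i : ZMod p) : ℂ) - L) * ζ ^ i = 0 := by
    simp only [sub_mul, Finset.sum_sub_distrib]
    rw [hrange, ← Finset.mul_sum, hgeom, mul_zero, sub_zero]
  have hp1 : p - 1 + 1 = p := Nat.succ_pred_eq_of_pos hp.pos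
  have h3 : ∑ i ∈ Finset.range (p - 1), ((c (i : ZMod p) : ℂ) - L) * ζ ^ i = 0 := by
    rw [← h2]
    apply Finset.sum_subset
    · exact Finset.range_subset_range.2 (by omega)
    · intro x hx hnx
      have hxe : x = p - 1 := by
        have h4 := Finset.mem_range.1 hx
        have h5 : ¬ x < p - 1 := fun h => hnx (Finset.mem_range.2 h)
        omega
      subst hxe
      rw [hL, sub_self, zero_mul]
  set q : Polynomial ℚ :=
    ∑ i ∈ Finset.range (p - 1), Polynomial.C ((c (i : ZMod p) : ℚ) - (L : ℚ)) * Polynomial.X ^ i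
    with hq
  have haev : Polynomial.aeval ζ q = 0 := by
    rw [hq, map_sum, ← h3]
    refine Finset.sum_congr rfl fun i _ => ?_
    rw [map_mul, map_pow, Polynomial.aeval_C, Polynomial.aeval_X]
    push_cast
    ring
  have hq0 : q = 0 := by
    by_contra hne
    have hdvd : minpoly ℚ ζ ∣ q := minpoly.dvd ℚ ζ haev
    have hdeg : (minpoly ℚ ζ).natDegree ≤ q.natDegree := Polynomial.natDegree_le_of_dvd hdvd hne
    have hmin : (minpoly ℚ ζ).natDegree = p - 1 := by
      rw [← Polynomial.cyclotomic_eq_minpoly_rat hζ hp.pos, Polynomial.natDegree_cyclotomic,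
        Nat.totient_prime hp]
    have hqdeg : q.natDegree ≤ p - 2 := by
      rw [hq]
      refine Polynomial.natDegree_sum_le_of_forall_le _ _ fun i hi => ?_
      refine le_trans (Polynomial.natDegree_C_mul_le _ _) ?_
      rw [Polynomial.natDegree_X_pow]
      have := Finset.mem_range.1 hi
      omega
    have := hp.two_le
    omega
  have hcoe : ∀ i, i < p - 1 → (c (i : ZMod p) : ℚ) = L := by
    intro i hi
    have hc : q.coeff i = (c (i : ZMod p) : ℚ) - L := by
      rw [hq, Polynomial.finset_sum_coeff]
      rw [Finset.sum_eq_single i]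
      · rw [Polynomial.coeff_C_mul, Polynomial.coeff_X_pow, if_pos rfl, mul_one]
      · intro b _ hb
        rw [Polynomial.coeff_C_mul, Polynomial.coeff_X_pow, if_neg (Ne.symm hb), mul_zero]
      · intro hmemr; exact absurd (Finset.mem_range.2 hi) hmemr
    rw [hq0, Polynomial.coeff_zero] at hc
    linarith [hc]
  have hall : ∀ j : ZMod p, c j = L := by
    intro j
    have hv : j.val < p := ZMod.val_lt j
    rcases lt_or_ge j.val (p - 1) with hlt | hge
    · have h5 := hcoe j.val hlt
      rw [ZMod.natCast_val, ZMod.cast_id] at h5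
      exact_mod_cast h5
    · have hje : j.val = p - 1 := by omega
      rw [hL]
      congr 1
      rw [← hje, ZMod.natCast_val, ZMod.cast_id]
  intro i j; rw [hall i, hall j]

lemma key_lemma [NeZero p] (hp : p.Prime) (a b : ZMod p → ℕ) (K : ℕ)
    (hconv : ∀ c : ZMod p, ∑ j : ZMod p, a j * b (c - j) = K)
    (ha : ¬ ∀ i j : ZMod p, a i = a j) (c0 : ZMod p) :
    p * b c0 = ∑ j : ZMod p, b j := by
  haveI : Fact p.Prime := ⟨hp⟩
  haveI : NeZero p := ⟨hp.ne_zero⟩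
  set ζ : ℂ := Complex.exp (2 * Real.pi * Complex.I / p) with hζdef
  have hζ : IsPrimitiveRoot ζ p := Complex.isPrimitiveRoot_exp p hp.ne_zero
  have hζ1 : ζ ^ p = 1 := hζ.pow_eq_one
  set e : ZMod p → ℂ := fun u => ζ ^ u.val with he
  have he_add : ∀ u v : ZMod p, e (u + v) = e u * e v := fun u v => e_add hζ1 u v
  have hesum : ∑ x : ZMod p, e x = 0 := esum hp hζ
  have he0 : e 0 = 1 := by rw [he]; simp
  have hmulsumL : ∀ u : ZMod p, u ≠ 0 → ∑ t : ZMod p, e (u * t) = 0 := by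
    intro u hu
    have h1 := Equiv.sum_comp (Equiv.mulLeft₀ u hu) e
    rw [← hesum, ← h1]
    exact Finset.sum_congr rfl fun t _ => by rw [Equiv.mulLeft₀_apply]
  have hmulsumR : ∀ u : ZMod p, u ≠ 0 → ∑ t : ZMod p, e (t * u) = 0 := by
    intro u hu
    have h1 := Equiv.sum_comp (Equiv.mulRight₀ u hu) e
    rw [← hesum, ← h1]
    exact Finset.sum_congr rfl fun t _ => by rw [Equiv.mulRight₀_apply]
  set F : ZMod p → ℂ := fun t => ∑ j : ZMod p, (a j : ℂ) * e (j * t) with hF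
  set Bh : ZMod p → ℂ := fun t => ∑ j : ZMod p, (b j : ℂ) * e (j * t) with hB
  have hprod : ∀ t : ZMod p, t ≠ 0 → F t * Bh t = 0 := by
    intro t ht
    have expand : F t * Bh t
        = ∑ cc : ZMod p, ((∑ j : ZMod p, (a j : ℂ) * (b (cc - j) : ℂ)) * e (cc * t)) := by
      rw [hF, hB, Finset.sum_mul_sum]
      have step1 : ∀ j : ZMod p,
          ∑ x : ZMod p, ((a j : ℂ) * e (j * t)) * ((b x : ℂ) * e (x * t))
            = ∑ cc : ZMod p, (a j : ℂ) * (b (cc - j) : ℂ) * e (cc * t) := by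
        intro j
        rw [← Equiv.sum_comp (Equiv.addLeft j)
          (fun cc => (a j : ℂ) * (b (cc - j) : ℂ) * e (cc * t))]
        refine Finset.sum_congr rfl fun x _ => ?_
        rw [Equiv.coe_addLeft]
        rw [add_sub_cancel_left]
        rw [show (j + x) * t = j * t + x * t from by ring, he_add]
        ring
      rw [Finset.sum_congr rfl fun j _ => step1 j, Finset.sum_comm]
      exact Finset.sum_congr rfl fun cc _ => by rw [Finset.sum_mul]
    rw [expand]
    have hK : ∀ cc : ZMod p, (∑ j : ZMod p, (a j : ℂ) * (b (cc - j) : ℂ)) = (K : ℂ) := by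
      intro cc
      have h5 := hconv cc
      exact_mod_cast congrArg (Nat.cast : ℕ → ℂ) h5
    rw [Finset.sum_congr rfl fun cc _ => by rw [hK cc]]
    rw [← Finset.mul_sum, hmulsumR t ht, mul_zero]
  have hFne : ∀ t : ZMod p, t ≠ 0 → F t ≠ 0 := by
    intro t ht h0
    have hFalt : F t = ∑ j : ZMod p, ((a (j * t⁻¹) : ℕ) : ℂ) * e j := by
      rw [hF, ← Equiv.sum_comp (Equiv.mulRight₀ t ht)
        (fun j => ((a (j * t⁻¹) : ℕ) : ℂ) * e j)]
      refine Finset.sum_congr rfl fun x _ => ?_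
      rw [Equiv.mulRight₀_apply, mul_assoc, mul_inv_cancel₀ ht, mul_one]
    rw [h0] at hFalt
    have hconst := sum_const_of_sum_root_eq_zero hp hζ (fun j => a (j * t⁻¹)) (by
      rw [← hFalt])
    apply ha
    intro i j
    have h1 : a (i * t * t⁻¹) = a (j * t * t⁻¹) := hconst (i * t) (j * t)
    rwa [mul_assoc, mul_inv_cancel₀ ht, mul_one, mul_assoc, mul_inv_cancel₀ ht, mul_one] at h1
  have hB0 : ∀ t : ZMod p, t ≠ 0 → Bh t = 0 := by
    intro t ht
    rcases mul_eq_zero.1 (hprod t ht) with h | h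
    · exact absurd h (hFne t ht)
    · exact h
  have hinv : (p : ℂ) * (b c0 : ℂ) = ∑ j : ZMod p, (b j : ℂ) := by
    have h1 : ∑ t : ZMod p, Bh t * e ((-c0) * t) = (p : ℂ) * (b c0 : ℂ) := by
      calc ∑ t : ZMod p, Bh t * e ((-c0) * t)
          = ∑ t : ZMod p, ∑ j : ZMod p, (b j : ℂ) * e ((j - c0) * t) := by
            refine Finset.sum_congr rfl fun t _ => ?_
            rw [hB, Finset.sum_mul]
            refine Finset.sum_congr rfl fun j _ => ?_
            rw [mul_assoc, ← he_add]
            congr 2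
            ring
        _ = ∑ j : ZMod p, ∑ t : ZMod p, (b j : ℂ) * e ((j - c0) * t) := Finset.sum_comm
        _ = ∑ j : ZMod p, (b j : ℂ) * ∑ t : ZMod p, e ((j - c0) * t) := by
            exact Finset.sum_congr rfl fun j _ => (Finset.mul_sum _ _ _).symm
        _ = (p : ℂ) * (b c0 : ℂ) := by
            rw [Finset.sum_eq_single c0]
            · rw [sub_self]
              have : ∀ t : ZMod p, e ((0 : ZMod p) * t) = 1 := fun t => by
                rw [zero_mul, he0]
              rw [Finset.sum_congr rfl fun t _ => this t, Finset.sum_const, Finset.card_univ,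
                ZMod.card, nsmul_eq_mul, mul_one]
              ring
            · intro j _ hj
              rw [hmulsumL (j - c0) (sub_ne_zero.2 hj), mul_zero]
            · intro hmem; exact absurd (Finset.mem_univ c0) hmem
    have h2 : ∑ t : ZMod p, Bh t * e ((-c0) * t) = ∑ j : ZMod p, (b j : ℂ) := by
      rw [Finset.sum_eq_single 0]
      · have hj0 : ∀ j : ZMod p, e (j * 0) = 1 := fun j => by rw [mul_zero, he0]
        rw [mul_zero, he0, mul_one, hB]
        exact Finset.sum_congr rfl fun j _ => by rw [hj0 j, mul_one]
      · intro t _ ht; rw [hB0 t ht, zero_mul]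
      · intro hmem; exact absurd (Finset.mem_univ 0) hmem
    rw [← h1, h2]
  exact_mod_cast hinv

section FinsetHelpers

set_option linter.unusedSectionVars false

variable {G : Type*} [AddCommGroup G] [Fintype G] [DecidableEq G]

lemma fiber_card_mul {H : Type*} [AddCommGroup H] [Fintype H] [DecidableEq H]
    (f : G →+ H) (hsurj : Function.Surjective f) (c : H) :
    (Finset.univ.filter fun x => f x = c).card * Fintype.card H = Fintype.card G := by
  have h0 : ∀ c' : H, (Finset.univ.filter fun x : G => f x = c').card
      = (Finset.univ.filter fun x : G => f x = c).card := by
    intro c'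
    obtain ⟨u, hu⟩ := hsurj (c - c')
    refine Finset.card_nbij' (fun x => x + u) (fun x => x - u) ?_ ?_ ?_ ?_
    · intro x hx
      simp only [Finset.mem_coe, Finset.mem_filter, Finset.mem_univ, true_and] at hx ⊢
      rw [map_add, hx, hu]; abel
    · intro x hx
      simp only [Finset.mem_coe, Finset.mem_filter, Finset.mem_univ, true_and] at hx ⊢
      rw [map_sub, hx, hu]; abel
    · intro x _; simp
    · intro x _; simp
  have hsum : Fintype.card G = ∑ c' : H, (Finset.univ.filter fun x : G => f x = c').card := by
    rw [← Finset.card_univ]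
    exact Finset.card_eq_sum_card_fiberwise (fun x _ => Finset.mem_univ (f x))
  rw [hsum, Finset.sum_congr rfl fun c' _ => h0 c', Finset.sum_const, Finset.card_univ,
    smul_eq_mul, mul_comm]

lemma tiling_card (A B : Finset G)
    (htp : ∀ g : G, ∃! q : G × G, q.1 ∈ A ∧ q.2 ∈ B ∧ q.1 + q.2 = g) :
    A.card * B.card = Fintype.card G := by
  rw [← Finset.card_product, ← Finset.card_univ]
  apply Finset.card_nbij (fun q : G × G => q.1 + q.2)
  · intro q _; exact Finset.mem_univ _
  · intro q hq q' hq' h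
    rw [Finset.mem_coe, Finset.mem_product] at hq hq'
    have h' : q.1 + q.2 = q'.1 + q'.2 := h
    exact (htp (q.1 + q.2)).unique ⟨hq.1, hq.2, rfl⟩ ⟨hq'.1, hq'.2, h'.symm⟩
  · intro g _
    obtain ⟨q, ⟨h1, h2, h3⟩, -⟩ := htp g
    exact ⟨q, Finset.mem_coe.2 (Finset.mem_product.2 ⟨h1, h2⟩), h3⟩

lemma conv_card {p : ℕ} [NeZero p] (A B : Finset G)
    (htp : ∀ g : G, ∃! q : G × G, q.1 ∈ A ∧ q.2 ∈ B ∧ q.1 + q.2 = g)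
    (χ : G →+ ZMod p) (c : ZMod p) :
    ∑ j : ZMod p, (A.filter fun ω => χ ω = j).card * (B.filter fun t => χ t = c - j).card
      = (Finset.univ.filter fun g : G => χ g = c).card := by
  have key : ((A ×ˢ B).filter fun q => χ (q.1 + q.2) = c).card
      = (Finset.univ.filter fun g : G => χ g = c).card := by
    apply Finset.card_nbij (fun q : G × G => q.1 + q.2)
    · intro q hq
      rw [Finset.mem_coe, Finset.mem_filter] at hq
      exact Finset.mem_filter.2 ⟨Finset.mem_univ _, hq.2⟩
    · intro q hq q' hq' h
      rw [Finset.mem_coe, Finset.mem_filter, Finset.mem_product] at hq hq'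
      have h' : q.1 + q.2 = q'.1 + q'.2 := h
      exact (htp (q.1 + q.2)).unique ⟨hq.1.1, hq.1.2, rfl⟩ ⟨hq'.1.1, hq'.1.2, h'.symm⟩
    · intro g hg
      rw [Finset.mem_coe, Finset.mem_filter] at hg
      obtain ⟨q, ⟨h1, h2, h3⟩, -⟩ := htp g
      refine ⟨q, Finset.mem_coe.2 (Finset.mem_filter.2
        ⟨Finset.mem_product.2 ⟨h1, h2⟩, by rw [h3]; exact hg.2⟩), h3⟩
  rw [← key, Finset.card_eq_sum_card_fiberwise
    (f := fun q : G × G => χ q.1) (t := Finset.univ) (fun _ _ => Finset.mem_univ _)]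
  refine Finset.sum_congr rfl fun j _ => ?_
  rw [← Finset.card_product]
  congr 1
  ext q
  simp only [Finset.mem_filter, Finset.mem_product, map_add]
  constructor
  · rintro ⟨⟨h1, h4⟩, h2, h5⟩
    exact ⟨⟨⟨h1, h2⟩, by rw [h4, h5]; abel⟩, h4⟩
  · rintro ⟨⟨⟨h1, h2⟩, h3⟩, h4⟩
    refine ⟨⟨h1, h4⟩, h2, ?_⟩
    rw [← h3, h4]; abel

lemma pair_count {γ : Type*} [Fintype γ] [DecidableEq γ] (s : Finset G) (f : G → γ) :
    ((s ×ˢ s).filter fun q => f q.1 = f q.2).card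
      = ∑ c : γ, (s.filter fun x => f x = c).card * (s.filter fun x => f x = c).card := by
  rw [Finset.card_eq_sum_card_fiberwise
    (f := fun q : G × G => f q.1) (t := Finset.univ) (fun _ _ => Finset.mem_univ _)]
  refine Finset.sum_congr rfl fun c _ => ?_
  rw [← Finset.card_product]
  congr 1
  ext q
  simp only [Finset.mem_filter, Finset.mem_product]
  constructor
  · rintro ⟨⟨⟨h1, h2⟩, h3⟩, h4⟩
    exact ⟨⟨h1, h4⟩, h2, by rw [← h3, h4]⟩
  · rintro ⟨⟨h1, h4⟩, h2, h5⟩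
    exact ⟨⟨⟨h1, h2⟩, by rw [h4, h5]⟩, h4⟩

lemma diag_filter_card (s : Finset G) :
    ((s ×ˢ s).filter fun q => q.1 = q.2).card = s.card := by
  apply Finset.card_nbij (fun q : G × G => q.1)
  · intro q hq
    rw [Finset.mem_coe, Finset.mem_filter, Finset.mem_product] at hq
    exact hq.1.1
  · intro q hq q' hq' h
    rw [Finset.mem_coe, Finset.mem_filter, Finset.mem_product] at hq hq'
    have h' : q.1 = q'.1 := h
    exact Prod.ext h' (by rw [← hq.2, ← hq'.2, h'])
  · intro x hx
    rw [Finset.mem_coe] at hx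
    exact ⟨(x, x), Finset.mem_coe.2 (Finset.mem_filter.2
      ⟨Finset.mem_product.2 ⟨hx, hx⟩, rfl⟩), rfl⟩

lemma fibers_of_complement {p : ℕ} (hp : p.Prime) (hG : Fintype.card G = p ^ 3)
    (A B : Finset G)
    (htp : ∀ g : G, ∃! q : G × G, q.1 ∈ A ∧ q.2 ∈ B ∧ q.1 + q.2 = g)
    (χ : G →+ ZMod p) (hs : Function.Surjective χ)
    (hna : ¬ ∀ i j : ZMod p,
      (A.filter fun ω => χ ω = i).card = (A.filter fun ω => χ ω = j).card)
    (c : ZMod p) :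
    p * (B.filter fun t => χ t = c).card = B.card := by
  haveI : NeZero p := ⟨hp.ne_zero⟩
  have hfib : ∀ c' : ZMod p, (Finset.univ.filter fun g : G => χ g = c').card = p ^ 2 := by
    intro c'
    have h1 := fiber_card_mul χ hs c'
    rw [hG, ZMod.card] at h1
    have hpp : p ^ 3 = p ^ 2 * p := by ring
    rw [hpp] at h1
    exact Nat.eq_of_mul_eq_mul_right hp.pos h1
  have hconv : ∀ c' : ZMod p,
      ∑ j : ZMod p, (A.filter fun ω => χ ω = j).card * (B.filter fun t => χ t = c' - j).card
        = p ^ 2 := fun c' => by rw [conv_card A B htp χ c', hfib]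
  have hk := key_lemma hp (fun j => (A.filter fun ω => χ ω = j).card)
    (fun j => (B.filter fun t => χ t = j).card) (p ^ 2) hconv hna c
  rw [hk]
  exact (Finset.card_eq_sum_card_fiberwise (fun x _ => Finset.mem_univ (χ x))).symm

end FinsetHelpers

section Fin3

variable (p : ℕ)

/-- dot product with `y` as an additive hom in the second variable. -/
def dotHom (y : Fin 3 → ZMod p) : (Fin 3 → ZMod p) →+ ZMod p :=
  AddMonoidHom.mk' (fun x => y 0 * x 0 + y 1 * x 1 + y 2 * x 2) (by
    intro a b
    simp only [Pi.add_apply]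
    ring)

lemma dotHom_apply (y x : Fin 3 → ZMod p) :
    dotHom p y x = y 0 * x 0 + y 1 * x 1 + y 2 * x 2 := rfl

lemma dotHom_comm (y x : Fin 3 → ZMod p) : dotHom p y x = dotHom p x y := by
  rw [dotHom_apply, dotHom_apply]; ring

lemma dotHom_surj (hp : p.Prime) (y : Fin 3 → ZMod p) (hy : y ≠ 0) :
    Function.Surjective (dotHom p y) := by
  haveI : Fact p.Prime := ⟨hp⟩
  have hex : ∃ i, y i ≠ 0 := by
    by_contra h
    push_neg at h
    exact hy (funext h)
  obtain ⟨i, hi⟩ := hex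
  intro c
  refine ⟨fun j => if j = i then c * (y i)⁻¹ else 0, ?_⟩
  rw [dotHom_apply]
  fin_cases i <;> simp_all <;> field_simp

/-- dot product on `ZMod p × ZMod p`. -/
def dot2Hom (y : ZMod p × ZMod p) : (ZMod p × ZMod p) →+ ZMod p :=
  AddMonoidHom.mk' (fun v => y.1 * v.1 + y.2 * v.2) (by
    intro a b
    simp only [Prod.fst_add, Prod.snd_add]
    ring)

lemma dot2Hom_apply (y v : ZMod p × ZMod p) :
    dot2Hom p y v = y.1 * v.1 + y.2 * v.2 := rfl

lemma dot2Hom_comm (y v : ZMod p × ZMod p) : dot2Hom p y v = dot2Hom p v y := by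
  rw [dot2Hom_apply, dot2Hom_apply]; ring

lemma dot2Hom_surj (hp : p.Prime) (y : ZMod p × ZMod p) (hy : y ≠ 0) :
    Function.Surjective (dot2Hom p y) := by
  haveI : Fact p.Prime := ⟨hp⟩
  intro c
  rcases Prod.mk.injEq .. ▸ (fun h => hy h : ¬ y = (0, 0)) with -
  by_cases h1 : y.1 ≠ 0
  · refine ⟨(c * y.1⁻¹, 0), ?_⟩
    rw [dot2Hom_apply]
    simp only [mul_zero, add_zero]
    rw [mul_comm c, ← mul_assoc, mul_inv_cancel₀ h1, one_mul]
  · push_neg at h1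
    have h2 : y.2 ≠ 0 := by
      intro h2
      exact hy (Prod.ext h1 h2)
    refine ⟨(0, c * y.2⁻¹), ?_⟩
    rw [dot2Hom_apply]
    simp only [mul_zero, zero_add]
    rw [mul_comm c, ← mul_assoc, mul_inv_cancel₀ h2, one_mul]

lemma exists_tri : ∀ i0 : Fin 3, ∃ i1 i2 : Fin 3, i1 ≠ i0 ∧ i2 ≠ i0 ∧ i1 ≠ i2 := by decide

end Fin3

lemma case_two (hp : p.Prime) (Ω : Set (Fin 3 → ZMod p)) (A : Finset (Fin 3 → ZMod p))
    (hmem : ∀ x, x ∈ A ↔ x ∈ Ω) (hAcard : A.card = p ^ 2) :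
    ∃ Ω' : AddSubgroup (Fin 3 → ZMod p),
      ∀ T : Set (Fin 3 → ZMod p), IsTilingPair Ω T →
        IsTilingPair (Ω' : Set (Fin 3 → ZMod p)) T := by
  classical
  haveI : Fact p.Prime := ⟨hp⟩
  haveI : NeZero p := ⟨hp.ne_zero⟩
  have hG : Fintype.card (Fin 3 → ZMod p) = p ^ 3 := by
    simp [ZMod.card]
  have hex : ∃ y : Fin 3 → ZMod p, y ≠ 0 ∧ ¬ ∀ i j : ZMod p,
      (A.filter fun ω => dotHom p y ω = i).card
        = (A.filter fun ω => dotHom p y ω = j).card := by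
    by_contra hcon
    push_neg at hcon
    have hval : ∀ y : Fin 3 → ZMod p, y ≠ 0 → ∀ c : ZMod p,
        (A.filter fun ω => dotHom p y ω = c).card = p := by
      intro y hy c
      have hsum : ∑ c' : ZMod p, (A.filter fun ω => dotHom p y ω = c').card = p ^ 2 := by
        rw [← hAcard]
        exact (Finset.card_eq_sum_card_fiberwise (fun x _ => Finset.mem_univ _)).symm
      rw [Finset.sum_congr rfl (fun c' _ => hcon y hy c' c), Finset.sum_const,
        Finset.card_univ, ZMod.card, smul_eq_mul] at hsum
      have h9 : p * (A.filter fun ω => dotHom p y ω = c).card = p * p := by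
        rw [hsum]; ring
      exact Nat.eq_of_mul_eq_mul_left hp.pos h9
    set E := (Finset.univ : Finset (Fin 3 → ZMod p)).erase 0 with hE
    have hEcard : E.card = p ^ 3 - 1 := by
      rw [hE, Finset.card_erase_of_mem (Finset.mem_univ _), Finset.card_univ, hG]
    have way1 : ∀ y ∈ E,
        ((A ×ˢ A).filter fun q => dotHom p y q.1 = dotHom p y q.2).card = p ^ 3 := by
      intro y hy
      have hy0 : y ≠ 0 := Finset.ne_of_mem_erase hy
      rw [pair_count A (fun x => dotHom p y x),
        Finset.sum_congr rfl (fun c _ => by rw [hval y hy0 c]), Finset.sum_const,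
        Finset.card_univ, ZMod.card, smul_eq_mul]
      ring
    have way2 : ∀ q : (Fin 3 → ZMod p) × (Fin 3 → ZMod p),
        (E.filter fun y => dotHom p y q.1 = dotHom p y q.2).card
          = (if q.1 = q.2 then p ^ 3 else p ^ 2) - 1 := by
      intro q
      have hiff : ∀ y : Fin 3 → ZMod p,
          (dotHom p y q.1 = dotHom p y q.2) ↔ dotHom p (q.1 - q.2) y = 0 := by
        intro y
        rw [← sub_eq_zero, ← map_sub, dotHom_comm]
      rw [Finset.filter_congr (fun y _ => by rw [hiff y]), hE, Finset.filter_erase]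
      have h0mem : (0 : Fin 3 → ZMod p)
          ∈ Finset.univ.filter (fun y => dotHom p (q.1 - q.2) y = 0) :=
        Finset.mem_filter.2 ⟨Finset.mem_univ _, map_zero _⟩
      rw [Finset.card_erase_of_mem h0mem]
      congr 1
      by_cases hq : q.1 = q.2
      · rw [if_pos hq]
        have hsub : q.1 - q.2 = 0 := sub_eq_zero.2 hq
        rw [hsub, Finset.filter_true_of_mem (fun y _ => by
          rw [dotHom_apply]; simp), Finset.card_univ, hG]
      · rw [if_neg hq]
        have hw : q.1 - q.2 ≠ 0 := sub_ne_zero.2 hq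
        have h10 := fiber_card_mul (dotHom p (q.1 - q.2)) (dotHom_surj p hp _ hw) 0
        rw [hG, ZMod.card] at h10
        have hpp : p ^ 3 = p ^ 2 * p := by ring
        rw [hpp] at h10
        exact Nat.eq_of_mul_eq_mul_right hp.pos h10
    have hS : ∑ y ∈ E, ((A ×ˢ A).filter fun q => dotHom p y q.1 = dotHom p y q.2).card
        = ∑ q ∈ A ×ˢ A, (E.filter fun y => dotHom p y q.1 = dotHom p y q.2).card := by
      simp only [Finset.card_filter]
      rw [Finset.sum_comm]
    rw [Finset.sum_congr rfl way1, Finset.sum_const, hEcard, smul_eq_mul] at hS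
    rw [Finset.sum_congr rfl (fun q _ => way2 q)] at hS
    have hsplit : ∑ q ∈ A ×ˢ A, ((if q.1 = q.2 then p ^ 3 else p ^ 2) - 1)
        = ∑ q ∈ A ×ˢ A, (if q.1 = q.2 then p ^ 3 - 1 else p ^ 2 - 1) :=
      Finset.sum_congr rfl fun q _ => by by_cases hq : q.1 = q.2 <;> simp [hq]
    rw [hsplit, Finset.sum_ite, Finset.sum_const, Finset.sum_const, smul_eq_mul,
      smul_eq_mul, diag_filter_card] at hS
    have hcompl : ((A ×ˢ A).filter fun q : _ × _ => ¬ q.1 = q.2).card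
        = p ^ 4 - p ^ 2 := by
      have h11 := Finset.card_filter_add_card_filter_not
        (s := A ×ˢ A) (p := fun q : _ × _ => q.1 = q.2)
      rw [Finset.card_product, hAcard, diag_filter_card, hAcard,
        show p ^ 2 * p ^ 2 = p ^ 4 from by ring] at h11
      have e3 : p ^ 2 ≤ p ^ 4 := Nat.pow_le_pow_right hp.pos (by omega)
      omega
    rw [hcompl, hAcard] at hS
    -- hS : (p^3-1) * p^3 = p^2 * (p^3-1) + (p^4-p^2) * (p^2-1)
    have hp2 : 2 ≤ p := hp.two_le
    have e1 : 1 ≤ p ^ 3 := Nat.one_le_pow _ _ hp.pos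
    have e2 : 1 ≤ p ^ 2 := Nat.one_le_pow _ _ hp.pos
    have e4 : p ^ 2 ≤ p ^ 4 := Nat.pow_le_pow_right hp.pos (by omega)
    zify [e1, e2, e4] at hS
    have hp2' : (2 : ℤ) ≤ (p : ℤ) := by exact_mod_cast hp2
    nlinarith [hS, hp2', sq_nonneg ((p : ℤ) - 1), pow_pos (show (0:ℤ) < p by omega) 3]
  obtain ⟨y0, hy0, hna⟩ := hex
  refine ⟨(dotHom p y0).ker, ?_⟩
  intro T htpT
  obtain ⟨B, hmemB⟩ : ∃ B : Finset (Fin 3 → ZMod p), ∀ x, x ∈ B ↔ x ∈ T :=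
    ⟨(Set.toFinite T).toFinset, fun x => (Set.toFinite T).mem_toFinset⟩
  have htpF : ∀ g : Fin 3 → ZMod p,
      ∃! q : (Fin 3 → ZMod p) × (Fin 3 → ZMod p), q.1 ∈ A ∧ q.2 ∈ B ∧ q.1 + q.2 = g := by
    intro g
    obtain ⟨q, ⟨hq1, hq2, hq3⟩, hu⟩ := htpT g
    exact ⟨q, ⟨(hmem q.1).2 hq1, (hmemB q.2).2 hq2, hq3⟩,
      fun y hy => hu y ⟨(hmem y.1).1 hy.1, (hmemB y.2).1 hy.2.1, hy.2.2⟩⟩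
  have hBcard : B.card = p := by
    have h6 := tiling_card A B htpF
    rw [hG, hAcard] at h6
    have h7 : p ^ 2 * B.card = p ^ 2 * p := by rw [h6]; ring
    exact Nat.eq_of_mul_eq_mul_left (pow_pos hp.pos 2) h7
  have hfib1 : ∀ c : ZMod p, (B.filter fun t => dotHom p y0 t = c).card = 1 := by
    intro c
    have h7 := fibers_of_complement hp hG A B htpF (dotHom p y0)
      (dotHom_surj p hp y0 hy0) hna c
    rw [hBcard] at h7
    have h8 : p * (B.filter fun t => dotHom p y0 t = c).card = p * 1 := by
      rw [h7, mul_one]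
    exact Nat.eq_of_mul_eq_mul_left hp.pos h8
  have hexu : ∀ c : ZMod p, ∃! t, t ∈ B ∧ dotHom p y0 t = c := by
    intro c
    obtain ⟨t, ht⟩ := Finset.card_eq_one.1 (hfib1 c)
    have htm : t ∈ B.filter fun t => dotHom p y0 t = c := by
      rw [ht]; exact Finset.mem_singleton_self t
    refine ⟨t, ⟨(Finset.mem_filter.1 htm).1, (Finset.mem_filter.1 htm).2⟩, ?_⟩
    intro t' ht'
    have h12 : t' ∈ B.filter fun t => dotHom p y0 t = c :=
      Finset.mem_filter.2 ⟨ht'.1, ht'.2⟩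
    rw [ht] at h12
    exact Finset.mem_singleton.1 h12
  intro g
  obtain ⟨t, ⟨htB, htc⟩, htu⟩ := hexu (dotHom p y0 g)
  refine ⟨(g - t, t), ⟨?_, (hmemB t).1 htB, by simp⟩, ?_⟩
  · show g - t ∈ ((dotHom p y0).ker : Set (Fin 3 → ZMod p))
    rw [SetLike.mem_coe, AddMonoidHom.mem_ker, map_sub, htc, sub_self]
  · rintro ⟨x, t'⟩ ⟨hx, ht', hsum⟩
    have hxk : dotHom p y0 x = 0 := by
      rw [SetLike.mem_coe, AddMonoidHom.mem_ker] at hx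
      exact hx
    have ht'eq : t' = t := htu t' ⟨(hmemB t').2 ht', by
      rw [← hsum, map_add, hxk, zero_add]⟩
    have hxeq : x = g - t := by
      rw [← ht'eq]; exact eq_sub_of_add_eq hsum
    exact Prod.ext hxeq ht'eq

set_option maxHeartbeats 1000000 in
lemma case_one (hp : p.Prime) (Ω : Set (Fin 3 → ZMod p)) (A : Finset (Fin 3 → ZMod p))
    (hmem : ∀ x, x ∈ A ↔ x ∈ Ω) (hAcard : A.card = p)
    (h0 : (0 : Fin 3 → ZMod p) ∈ A) {d : Fin 3 → ZMod p} (hd : d ∈ A) (hd0 : d ≠ 0) :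
    ∃ Ω' : AddSubgroup (Fin 3 → ZMod p),
      ∀ T : Set (Fin 3 → ZMod p), IsTilingPair Ω T →
        IsTilingPair (Ω' : Set (Fin 3 → ZMod p)) T := by
  classical
  haveI : Fact p.Prime := ⟨hp⟩
  haveI : NeZero p := ⟨hp.ne_zero⟩
  have hG : Fintype.card (Fin 3 → ZMod p) = p ^ 3 := by simp [ZMod.card]
  have hH2 : Fintype.card (ZMod p × ZMod p) = p ^ 2 := by
    rw [Fintype.card_prod, ZMod.card]; ring
  obtain ⟨i0, hi0⟩ : ∃ i, d i ≠ 0 := by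
    by_contra h; push_neg at h; exact hd0 (funext h)
  obtain ⟨i1, i2, h10, h20, h12⟩ := exists_tri i0
  set ψ : (Fin 3 → ZMod p) →+ ZMod p × ZMod p := AddMonoidHom.mk'
      (fun x => (d i0 * x i1 - d i1 * x i0, d i0 * x i2 - d i2 * x i0))
      (by
        intro a b
        simp only [Pi.add_apply, Prod.mk_add_mk, Prod.mk.injEq]
        constructor <;> ring) with hψ
  have hψapp : ∀ x, ψ x = (d i0 * x i1 - d i1 * x i0, d i0 * x i2 - d i2 * x i0) :=
    fun x => rfl
  have hψd : ψ d = 0 := by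
    rw [hψapp]
    exact Prod.ext (by show d i0 * d i1 - d i1 * d i0 = 0; ring)
      (by show d i0 * d i2 - d i2 * d i0 = 0; ring)
  have hψsurj : Function.Surjective ψ := by
    rintro ⟨u, v⟩
    refine ⟨fun j => if j = i1 then u * (d i0)⁻¹ else if j = i2 then v * (d i0)⁻¹ else 0, ?_⟩
    rw [hψapp]
    have e1 : (if i1 = i1 then u * (d i0)⁻¹ else if i1 = i2 then v * (d i0)⁻¹ else 0)
        = u * (d i0)⁻¹ := by rw [if_pos rfl]
    have e2 : (if i2 = i1 then u * (d i0)⁻¹ else if i2 = i2 then v * (d i0)⁻¹ else 0)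
        = v * (d i0)⁻¹ := by rw [if_neg (fun h => h12 h.symm), if_pos rfl]
    have e0 : (if i0 = i1 then u * (d i0)⁻¹ else if i0 = i2 then v * (d i0)⁻¹ else 0)
        = 0 := by rw [if_neg (fun h => h10 h.symm), if_neg (fun h => h20 h.symm)]
    refine Prod.ext ?_ ?_
    · show d i0 * (if i1 = i1 then u * (d i0)⁻¹ else if i1 = i2 then v * (d i0)⁻¹ else 0)
        - d i1 * (if i0 = i1 then u * (d i0)⁻¹ else if i0 = i2 then v * (d i0)⁻¹ else 0) = u
      rw [e1, e0, mul_zero, sub_zero, mul_comm u, ← mul_assoc, mul_inv_cancel₀ hi0, one_mul]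
    · show d i0 * (if i2 = i1 then u * (d i0)⁻¹ else if i2 = i2 then v * (d i0)⁻¹ else 0)
        - d i2 * (if i0 = i1 then u * (d i0)⁻¹ else if i0 = i2 then v * (d i0)⁻¹ else 0) = v
      rw [e2, e0, mul_zero, sub_zero, mul_comm v, ← mul_assoc, mul_inv_cancel₀ hi0, one_mul]
  clear_value ψ
  refine ⟨ψ.ker, ?_⟩
  intro T htpT
  obtain ⟨B, hmemB⟩ : ∃ B : Finset (Fin 3 → ZMod p), ∀ x, x ∈ B ↔ x ∈ T :=
    ⟨(Set.toFinite T).toFinset, fun x => (Set.toFinite T).mem_toFinset⟩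
  have htpF : ∀ g : Fin 3 → ZMod p,
      ∃! q : (Fin 3 → ZMod p) × (Fin 3 → ZMod p), q.1 ∈ A ∧ q.2 ∈ B ∧ q.1 + q.2 = g := by
    intro g
    obtain ⟨q, ⟨hq1, hq2, hq3⟩, hu⟩ := htpT g
    exact ⟨q, ⟨(hmem q.1).2 hq1, (hmemB q.2).2 hq2, hq3⟩,
      fun y hy => hu y ⟨(hmem y.1).1 hy.1, (hmemB y.2).1 hy.2.1, hy.2.2⟩⟩
  have hBcard : B.card = p ^ 2 := by
    have h6 := tiling_card A B htpF
    rw [hG, hAcard] at h6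
    have h7 : p * B.card = p * p ^ 2 := by rw [h6]; ring
    exact Nat.eq_of_mul_eq_mul_left hp.pos h7
  have hfib : ∀ y : ZMod p × ZMod p, y ≠ 0 → ∀ c : ZMod p,
      (B.filter fun t => (dot2Hom p y).comp ψ t = c).card = p := by
    intro y hy c
    have hsurj2 : Function.Surjective ((dot2Hom p y).comp ψ) :=
      (dot2Hom_surj p hp y hy).comp hψsurj
    have hna : ¬ ∀ i j : ZMod p,
        (A.filter fun ω => (dot2Hom p y).comp ψ ω = i).card
          = (A.filter fun ω => (dot2Hom p y).comp ψ ω = j).card := by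
      intro hcontra
      have hsum : ∑ c' : ZMod p,
          (A.filter fun ω => (dot2Hom p y).comp ψ ω = c').card = A.card :=
        (Finset.card_eq_sum_card_fiberwise (fun x _ => Finset.mem_univ _)).symm
      rw [hAcard] at hsum
      have h2le : 2 ≤ (A.filter fun ω => (dot2Hom p y).comp ψ ω = 0).card := by
        have hsub : ({0, d} : Finset (Fin 3 → ZMod p))
            ⊆ A.filter fun ω => (dot2Hom p y).comp ψ ω = 0 := by
          intro x hx
          rcases Finset.mem_insert.1 hx with rfl | hx'
          · exact Finset.mem_filter.2 ⟨h0, map_zero _⟩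
          · rw [Finset.mem_singleton] at hx'
            subst hx'
            refine Finset.mem_filter.2 ⟨hd, ?_⟩
            rw [AddMonoidHom.comp_apply, hψd, map_zero]
        calc 2 = ({0, d} : Finset (Fin 3 → ZMod p)).card := by
              rw [Finset.card_pair (Ne.symm hd0)]
          _ ≤ _ := Finset.card_le_card hsub
      rw [Finset.sum_congr rfl (fun c' _ => hcontra c' 0), Finset.sum_const,
        Finset.card_univ, ZMod.card, smul_eq_mul] at hsum
      nlinarith [hp.two_le, h2le, hsum]
    have h7 := fibers_of_complement hp hG A B htpF _ hsurj2 hna c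
    rw [hBcard] at h7
    exact Nat.eq_of_mul_eq_mul_left hp.pos (by rw [h7]; ring)
  set E2 := (Finset.univ : Finset (ZMod p × ZMod p)).erase 0 with hE2
  have hE2card : E2.card = p ^ 2 - 1 := by
    rw [hE2, Finset.card_erase_of_mem (Finset.mem_univ _), Finset.card_univ, hH2]
  have way1 : ∀ y ∈ E2,
      ((B ×ˢ B).filter fun q =>
        (dot2Hom p y).comp ψ q.1 = (dot2Hom p y).comp ψ q.2).card = p ^ 3 := by
    intro y hy
    have hy0 : y ≠ 0 := Finset.ne_of_mem_erase hy
    rw [pair_count B (fun x => (dot2Hom p y).comp ψ x),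
      Finset.sum_congr rfl (fun c _ => by rw [hfib y hy0 c]), Finset.sum_const,
      Finset.card_univ, ZMod.card, smul_eq_mul]
    ring
  have way2 : ∀ q : (Fin 3 → ZMod p) × (Fin 3 → ZMod p),
      (E2.filter fun y => (dot2Hom p y).comp ψ q.1 = (dot2Hom p y).comp ψ q.2).card
        = (if ψ q.1 = ψ q.2 then p ^ 2 else p) - 1 := by
    intro q
    have hiff : ∀ y : ZMod p × ZMod p,
        ((dot2Hom p y).comp ψ q.1 = (dot2Hom p y).comp ψ q.2)
          ↔ dot2Hom p (ψ q.1 - ψ q.2) y = 0 := by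
      intro y
      rw [AddMonoidHom.comp_apply, AddMonoidHom.comp_apply, ← sub_eq_zero, ← map_sub,
        dot2Hom_comm]
    rw [Finset.filter_congr (fun y _ => by rw [hiff y]), hE2, Finset.filter_erase]
    have h0mem : (0 : ZMod p × ZMod p)
        ∈ Finset.univ.filter (fun y => dot2Hom p (ψ q.1 - ψ q.2) y = 0) :=
      Finset.mem_filter.2 ⟨Finset.mem_univ _, map_zero _⟩
    rw [Finset.card_erase_of_mem h0mem]
    congr 1
    by_cases hq : ψ q.1 = ψ q.2
    · rw [if_pos hq]
      have hsub : ψ q.1 - ψ q.2 = 0 := sub_eq_zero.2 hq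
      rw [hsub, Finset.filter_true_of_mem (fun y _ => by rw [dot2Hom_apply]; simp),
        Finset.card_univ, hH2]
    · rw [if_neg hq]
      have hw : ψ q.1 - ψ q.2 ≠ 0 := sub_ne_zero.2 hq
      have h10' := fiber_card_mul (dot2Hom p (ψ q.1 - ψ q.2)) (dot2Hom_surj p hp _ hw) 0
      rw [hH2, ZMod.card, show p ^ 2 = p * p from by ring] at h10'
      exact Nat.eq_of_mul_eq_mul_right hp.pos h10'
  have hS : ∑ y ∈ E2, ((B ×ˢ B).filter fun q =>
        (dot2Hom p y).comp ψ q.1 = (dot2Hom p y).comp ψ q.2).card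
      = ∑ q ∈ B ×ˢ B, (E2.filter fun y =>
        (dot2Hom p y).comp ψ q.1 = (dot2Hom p y).comp ψ q.2).card := by
    simp only [Finset.card_filter]
    rw [Finset.sum_comm]
  rw [Finset.sum_congr rfl way1, Finset.sum_const, hE2card, smul_eq_mul] at hS
  rw [Finset.sum_congr rfl (fun q _ => way2 q)] at hS
  have hsplit : ∑ q ∈ B ×ˢ B, ((if ψ q.1 = ψ q.2 then p ^ 2 else p) - 1)
      = ∑ q ∈ B ×ˢ B, (if ψ q.1 = ψ q.2 then p ^ 2 - 1 else p - 1) :=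
    Finset.sum_congr rfl fun q _ => by by_cases hq : ψ q.1 = ψ q.2 <;> simp [hq]
  rw [hsplit, Finset.sum_ite, Finset.sum_const, Finset.sum_const, smul_eq_mul,
    smul_eq_mul] at hS
  have hDiag : ((B ×ˢ B).filter fun q : _ × _ => q.1 = q.2)
      ⊆ (B ×ˢ B).filter fun q : _ × _ => ψ q.1 = ψ q.2 := by
    intro q hq
    have h13 := Finset.mem_filter.1 hq
    exact Finset.mem_filter.2 ⟨h13.1, by rw [h13.2]⟩
  have hDge : p ^ 2 ≤ ((B ×ˢ B).filter fun q : _ × _ => ψ q.1 = ψ q.2).card := by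
    calc p ^ 2 = ((B ×ˢ B).filter fun q : _ × _ => q.1 = q.2).card := by
          rw [diag_filter_card, hBcard]
      _ ≤ _ := Finset.card_le_card hDiag
  have h11 := Finset.card_filter_add_card_filter_not
    (s := B ×ˢ B) (p := fun q : _ × _ => ψ q.1 = ψ q.2)
  rw [Finset.card_product, hBcard, show p ^ 2 * p ^ 2 = p ^ 4 from by ring] at h11
  have hDeq : ((B ×ˢ B).filter fun q : _ × _ => ψ q.1 = ψ q.2).card = p ^ 2 := by
    have hp2' : (2 : ℤ) ≤ (p : ℤ) := by exact_mod_cast hp.two_le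
    have e2 : 1 ≤ p ^ 2 := Nat.one_le_pow _ _ hp.pos
    have e5 : 1 ≤ p := hp.pos
    zify [e2, e5] at hS
    zify at h11 hDge
    have key2 : (((((B ×ˢ B).filter fun q : _ × _ => ψ q.1 = ψ q.2).card : ℤ)) - (p : ℤ) ^ 2)
        * ((p : ℤ) ^ 2 - p) = 0 := by
      linear_combination -hS + (1 - (p : ℤ)) * h11
    have hpos : (0 : ℤ) < (p : ℤ) ^ 2 - p := by nlinarith
    rcases mul_eq_zero.1 key2 with h | h
    · have h14 : (((B ×ˢ B).filter fun q : _ × _ => ψ q.1 = ψ q.2).card : ℤ) = (p : ℤ) ^ 2 := by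
        linarith
      exact_mod_cast h14
    · exfalso; linarith
  have hinjOn : ∀ t ∈ B, ∀ t' ∈ B, ψ t = ψ t' → t = t' := by
    intro t ht t' ht' hψeq
    have hsubeq : (B ×ˢ B).filter (fun q : _ × _ => ψ q.1 = ψ q.2)
        = (B ×ˢ B).filter fun q : _ × _ => q.1 = q.2 := by
      refine (Finset.eq_of_subset_of_card_le hDiag ?_).symm
      rw [diag_filter_card, hBcard, hDeq]
    have hmemf : (t, t') ∈ (B ×ˢ B).filter fun q : _ × _ => ψ q.1 = ψ q.2 :=
      Finset.mem_filter.2 ⟨Finset.mem_product.2 ⟨ht, ht'⟩, hψeq⟩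
    rw [hsubeq] at hmemf
    exact (Finset.mem_filter.1 hmemf).2
  have himg : B.image (fun t => ψ t) = Finset.univ := by
    apply Finset.eq_univ_of_card
    rw [Finset.card_image_of_injOn (fun t ht t' ht' h => hinjOn t ht t' ht' h), hBcard, hH2]
  have hexu : ∀ v : ZMod p × ZMod p, ∃! t, t ∈ B ∧ ψ t = v := by
    intro v
    have hv : v ∈ B.image (fun t => ψ t) := by rw [himg]; exact Finset.mem_univ v
    obtain ⟨t, htB, htv⟩ := Finset.mem_image.1 hv
    exact ⟨t, ⟨htB, htv⟩, fun t' ht' => hinjOn t' ht'.1 t htB (by rw [ht'.2, htv])⟩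
  intro g
  obtain ⟨t, ⟨htB, htv⟩, htu⟩ := hexu (ψ g)
  refine ⟨(g - t, t), ⟨?_, (hmemB t).1 htB, by simp⟩, ?_⟩
  · show g - t ∈ (ψ.ker : Set (Fin 3 → ZMod p))
    rw [SetLike.mem_coe, AddMonoidHom.mem_ker, map_sub, htv, sub_self]
  · rintro ⟨x, t'⟩ ⟨hx, ht', hsum⟩
    have hxk : ψ x = 0 := by
      rw [SetLike.mem_coe, AddMonoidHom.mem_ker] at hx
      exact hx
    have ht'eq : t' = t := htu t' ⟨(hmemB t').2 ht', by rw [← hsum, map_add, hxk, zero_add]⟩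
    exact Prod.ext (by rw [← ht'eq]; exact eq_sub_of_add_eq hsum) ht'eq

end TileAux


/-- Every non-trivial tile `Ω` of `(Z_p)^3` containing `0` can be replaced by
a subgroup `Ω'` which is a tiling complement of every tiling complement of
`Ω`. -/
theorem tile_replaced_by_subgroup (p : ℕ) (hp : p.Prime)
    (Ω : Set (Fin 3 → ZMod p)) (h0 : (0 : Fin 3 → ZMod p) ∈ Ω)
    (hcard : 1 < Ω.ncard ∧ Ω.ncard < p ^ 3) (htile : IsTile Ω) :
    ∃ Ω' : AddSubgroup (Fin 3 → ZMod p),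
      ∀ T : Set (Fin 3 → ZMod p), IsTilingPair Ω T →
        IsTilingPair (Ω' : Set (Fin 3 → ZMod p)) T := by
  classical
  haveI : NeZero p := ⟨hp.ne_zero⟩
  obtain ⟨T0, hT0⟩ := htile
  obtain ⟨A, hmem⟩ : ∃ A : Finset (Fin 3 → ZMod p), ∀ x, x ∈ A ↔ x ∈ Ω :=
    ⟨(Set.toFinite Ω).toFinset, fun x => (Set.toFinite Ω).mem_toFinset⟩
  obtain ⟨B0, hmemB0⟩ : ∃ B : Finset (Fin 3 → ZMod p), ∀ x, x ∈ B ↔ x ∈ T0 :=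
    ⟨(Set.toFinite T0).toFinset, fun x => (Set.toFinite T0).mem_toFinset⟩
  have hncard : Ω.ncard = A.card := by
    have hΩA : Ω = ↑A := by
      ext x
      rw [Finset.mem_coe, hmem x]
    rw [hΩA, Set.ncard_coe_finset]
  have hG : Fintype.card (Fin 3 → ZMod p) = p ^ 3 := by simp [ZMod.card]
  have htpF : ∀ g : Fin 3 → ZMod p,
      ∃! q : (Fin 3 → ZMod p) × (Fin 3 → ZMod p), q.1 ∈ A ∧ q.2 ∈ B0 ∧ q.1 + q.2 = g := by
    intro g
    obtain ⟨q, ⟨hq1, hq2, hq3⟩, hu⟩ := hT0 g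
    exact ⟨q, ⟨(hmem q.1).2 hq1, (hmemB0 q.2).2 hq2, hq3⟩,
      fun y hy => hu y ⟨(hmem y.1).1 hy.1, (hmemB0 y.2).1 hy.2.1, hy.2.2⟩⟩
  have hAB := TileAux.tiling_card A B0 htpF
  rw [hG] at hAB
  have hdvd : A.card ∣ p ^ 3 := ⟨B0.card, hAB.symm⟩
  obtain ⟨k, hk3, hAk⟩ := (Nat.dvd_prime_pow hp).1 hdvd
  have h1 : 1 < A.card := by rw [← hncard]; exact hcard.1
  have h2 : A.card < p ^ 3 := by rw [← hncard]; exact hcard.2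
  have hp2 := hp.two_le
  interval_cases k
  · rw [pow_zero] at hAk; omega
  · rw [pow_one] at hAk
    have h0A : (0 : Fin 3 → ZMod p) ∈ A := (hmem 0).2 h0
    obtain ⟨d, hdA, hd0⟩ := Finset.exists_mem_ne h1 0
    exact TileAux.case_one hp Ω A hmem hAk h0A hdA hd0
  · exact TileAux.case_two hp Ω A hmem hAk
  · rw [hAk] at h2; omega
end
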